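/- arXiv:2502.00526 — 2 statements merged into one kernel-verified Lean document; each statement's English description precedes it below -/
import Mathlib

section
/- For every prime q with q ≡ 3 (mod 4), the class number of the imaginary quadratic field ℚ(√−q) is odd. -/
open NumberField

open Polynomial

set_option maxHeartbeats 1000000
set_option synthInstance.maxHeartbeats 400000


variable {K : Type} [Field K] [NumberField K]

section Setup
variable {q : ℕ} {α : K}

lemma aux_qK_ne (hq : q ≠ 0) : (q : K) ≠ 0 := Nat.cast_ne_zero.mpr hq

lemma aux_alpha_ne (hq : q ≠ 0) (hα : α ^ 2 = -(q : K)) : α ≠ 0 := by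
  intro h
  apply aux_qK_ne (K := K) hq
  have := hα.symm
  rw [h] at this
  simpa using this.symm

lemma aux_not_rat (hq : q ≠ 0) (hα : α ^ 2 = -(q : K)) (r : ℚ) :
    algebraMap ℚ K r ≠ α := by
  intro h
  have h2 : algebraMap ℚ K (r ^ 2) = -(q : K) := by
    rw [map_pow, h, hα]
  have h3 : algebraMap ℚ K (r ^ 2) = algebraMap ℚ K (-(q : ℚ)) := by
    rw [h2]; push_cast; ring
  have h4 : r ^ 2 = -(q : ℚ) := (algebraMap ℚ K).injective h3
  have : (0 : ℚ) < q := by exact_mod_cast Nat.pos_of_ne_zero hq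
  nlinarith [sq_nonneg r]

lemma aux_minpoly (hq : q ≠ 0) (hα : α ^ 2 = -(q : K)) :
    minpoly ℚ α = X ^ 2 + C (q : ℚ) := by
  have hint : IsIntegral ℚ α := IsIntegral.of_finite ℚ α
  have hroot : (Polynomial.aeval α) (X ^ 2 + C (q : ℚ)) = 0 := by
    simp [hα]
  have hdvd : minpoly ℚ α ∣ X ^ 2 + C (q : ℚ) := minpoly.dvd ℚ α hroot
  have hmon : (X ^ 2 + C (q : ℚ)).Monic := monic_X_pow_add_C _ (by norm_num)
  have hd0 : (X ^ 2 + C (q : ℚ)).natDegree = 2 := by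
    rw [natDegree_X_pow_add_C]
  have hne1 : (minpoly ℚ α).natDegree ≠ 1 := by
    intro h1
    obtain ⟨r, hr⟩ := minpoly.natDegree_eq_one_iff.mp h1
    exact aux_not_rat hq hα r hr
  have hpos : 0 < (minpoly ℚ α).natDegree := minpoly.natDegree_pos hint
  have hle : (minpoly ℚ α).natDegree ≤ 2 := by
    have := Polynomial.natDegree_le_of_dvd hdvd hmon.ne_zero
    omega
  have h2 : (minpoly ℚ α).natDegree = 2 := by omega
  exact (Polynomial.eq_of_monic_of_dvd_of_natDegree_le (minpoly.monic hint) hmon hdvd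
    (by omega)).symm
end Setup
open IntermediateField in
/-- A power basis of `K` with generator `α`. -/
noncomputable def auxPB {q : ℕ} {α : K} (hq : q ≠ 0) (hdeg : Module.finrank ℚ K = 2)
    (hα : α ^ 2 = -(q : K)) : PowerBasis ℚ K := by
  have hint : IsIntegral ℚ α := IsIntegral.of_finite ℚ α
  have hfr : Module.finrank ℚ ℚ⟮α⟯ = 2 := by
    rw [IntermediateField.adjoin.finrank hint, aux_minpoly hq hα, natDegree_X_pow_add_C]
  have htop : ℚ⟮α⟯ = ⊤ := by
    apply IntermediateField.toSubalgebra_injective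
    apply Subalgebra.toSubmodule_injective
    apply Submodule.eq_top_of_finrank_eq
    rw [hdeg]; exact hfr
  exact (IntermediateField.adjoin.powerBasis hint).map
    ((IntermediateField.equivOfEq htop).trans IntermediateField.topEquiv)

section Sigma
variable {q : ℕ} {α : K}

lemma auxPB_gen (hq : q ≠ 0) (hdeg : Module.finrank ℚ K = 2) (hα : α ^ 2 = -(q : K)) :
    (auxPB hq hdeg hα).gen = α := by
  simp [auxPB, PowerBasis.map_gen]

lemma auxPB_dim (hq : q ≠ 0) (hdeg : Module.finrank ℚ K = 2) (hα : α ^ 2 = -(q : K)) :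
    (auxPB hq hdeg hα).dim = 2 := by
  rw [← (auxPB hq hdeg hα).finrank, hdeg]

lemma aux_lift_root (hq : q ≠ 0) (hdeg : Module.finrank ℚ K = 2) (hα : α ^ 2 = -(q : K)) :
    (Polynomial.aeval (-α)) (minpoly ℚ (auxPB hq hdeg hα).gen) = 0 := by
  rw [auxPB_gen, aux_minpoly hq hα]; simp [hα]

/-- The nontrivial automorphism. -/
noncomputable def auxSigma (hq : q ≠ 0) (hdeg : Module.finrank ℚ K = 2)
    (hα : α ^ 2 = -(q : K)) : K ≃ₐ[ℚ] K :=
  AlgEquiv.ofBijective ((auxPB hq hdeg hα).lift (-α) (aux_lift_root hq hdeg hα))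
    (AlgHom.bijective _)

lemma auxSigma_alpha (hq : q ≠ 0) (hdeg : Module.finrank ℚ K = 2) (hα : α ^ 2 = -(q : K)) :
    auxSigma hq hdeg hα α = -α := by
  have h := PowerBasis.lift_gen (auxPB hq hdeg hα) (-α) (aux_lift_root hq hdeg hα)
  have : auxSigma hq hdeg hα α =
      ((auxPB hq hdeg hα).lift (-α) (aux_lift_root hq hdeg hα)) α := rfl
  rw [this]
  exact (congrArg _ (auxPB_gen hq hdeg hα)).symm.trans h

lemma auxSigma_sq (hq : q ≠ 0) (hdeg : Module.finrank ℚ K = 2) (hα : α ^ 2 = -(q : K)) :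
    ∀ z : K, auxSigma hq hdeg hα (auxSigma hq hdeg hα z) = z := by
  set σ := auxSigma hq hdeg hα with hσ
  have key : (σ.toAlgHom.comp σ.toAlgHom) = AlgHom.id ℚ K := by
    apply (auxPB hq hdeg hα).algHom_ext
    rw [auxPB_gen hq hdeg hα]
    simp [hσ, auxSigma_alpha hq hdeg hα]
  intro z
  have := DFunLike.congr_fun key z
  simpa using this

/-- Coordinates: every element of `K` is `a + b α`. -/
lemma aux_coords (hq : q ≠ 0) (hdeg : Module.finrank ℚ K = 2) (hα : α ^ 2 = -(q : K))
    (z : K) : ∃ a b : ℚ, z = algebraMap ℚ K a + algebraMap ℚ K b * α := by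
  set pb := auxPB hq hdeg hα with hpb
  have hdim : pb.dim = 2 := auxPB_dim hq hdeg hα
  have hb := pb.basis.sum_repr z
  have hgen : pb.gen = α := auxPB_gen hq hdeg hα
  have h0 : pb.basis ⟨0, by omega⟩ = 1 := by rw [pb.basis_eq_pow]; simp
  have h1 : pb.basis ⟨1, by omega⟩ = α := by rw [pb.basis_eq_pow]; simp [hgen]
  have hsum : (Finset.univ : Finset (Fin pb.dim)) = {⟨0, by omega⟩, ⟨1, by omega⟩} := by
    ext i
    simp only [Finset.mem_univ, Finset.mem_insert, Finset.mem_singleton, true_iff]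
    rcases i with ⟨i, hi⟩
    have hi2 : i < 2 := by omega
    interval_cases i
    · left; rfl
    · right; rfl
  rw [hsum, Finset.sum_insert (by simp [Fin.ext_iff]), Finset.sum_singleton, h0, h1,
    Algebra.smul_def, Algebra.smul_def, mul_one] at hb
  exact ⟨_, _, hb.symm⟩
end Sigma
section RInt
variable {q : ℕ} {α : K}

/-- Linear independence of 1, α. -/
lemma aux_indep (hq : q ≠ 0) (hα : α ^ 2 = -(q : K)) {a b : ℚ}
    (h : algebraMap ℚ K a + algebraMap ℚ K b * α = 0) : a = 0 ∧ b = 0 := by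
  by_cases hb : b = 0
  · subst hb
    simp only [map_zero, zero_mul, add_zero] at h
    exact ⟨by simpa using (algebraMap ℚ K).injective (by simpa using h), rfl⟩
  · exfalso
    apply aux_not_rat hq hα (-a / b)
    have hbK : algebraMap ℚ K b ≠ 0 := by simpa using hb
    have : algebraMap ℚ K b * α = - algebraMap ℚ K a := by linear_combination h
    rw [map_div₀, map_neg, div_eq_iff hbK, eq_comm, mul_comm]
    linear_combination this

/-- Positivity of the "norm form". -/
lemma aux_pos (hq : q ≠ 0) (hdeg : Module.finrank ℚ K = 2) (hα : α ^ 2 = -(q : K))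
    {z : K} (hz : z ≠ 0) :
    ∃ r : ℚ, 0 < r ∧ z * auxSigma hq hdeg hα z = algebraMap ℚ K r := by
  obtain ⟨a, b, rfl⟩ := aux_coords hq hdeg hα z
  set σ := auxSigma hq hdeg hα
  have hσz : σ (algebraMap ℚ K a + algebraMap ℚ K b * α)
      = algebraMap ℚ K a - algebraMap ℚ K b * α := by
    simp [σ, auxSigma_alpha hq hdeg hα, AlgEquiv.commutes, mul_neg, sub_eq_add_neg]
  refine ⟨a ^ 2 + q * b ^ 2, ?_, ?_⟩
  · have hab : ¬(a = 0 ∧ b = 0) := by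
      rintro ⟨rfl, rfl⟩; simp at hz
    have hq0 : (0:ℚ) < q := by exact_mod_cast Nat.pos_of_ne_zero hq
    rcases eq_or_ne b 0 with rfl | hb
    · have ha : a ≠ 0 := by tauto
      nlinarith [pow_pos (abs_pos.mpr ha) 2, sq_abs a]
    · nlinarith [sq_nonneg a, pow_pos (abs_pos.mpr hb) 2, sq_abs b]
  · rw [hσz]
    push_cast
    ring_nf
    rw [hα]  -- may need adjusting
    ring
end RInt
set_option linter.unusedSectionVars false

section RingInt
variable {q : ℕ} {α : K}

open Polynomial in
lemma aux_alpha_integral (hα : α ^ 2 = -(q : K)) : IsIntegral ℤ α := by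
  refine ⟨X ^ 2 + C (q : ℤ), monic_X_pow_add_C _ (by norm_num), ?_⟩
  simp only [eval₂_add, eval₂_pow, eval₂_X, eval₂_C]
  push_cast
  rw [hα]; ring

/-- `√-q` as an algebraic integer. -/
noncomputable def alphaR (hα : α ^ 2 = -(q : K)) : 𝓞 K :=
  ⟨α, aux_alpha_integral hα⟩

@[simp] lemma alphaR_coe (hα : α ^ 2 = -(q : K)) : ((alphaR hα : 𝓞 K) : K) = α := rfl

lemma alphaR_sq (hα : α ^ 2 = -(q : K)) : (alphaR hα) ^ 2 = -(q : 𝓞 K) := by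
  apply RingOfIntegers.ext
  push_cast [alphaR_coe]
  rw [hα]

open Polynomial in
lemma aux_beta_integral (hq4 : q % 4 = 3) (hα : α ^ 2 = -(q : K)) :
    IsIntegral ℤ ((1 + α) / 2) := by
  obtain ⟨m, hm⟩ : ∃ m : ℕ, q + 1 = 4 * m := ⟨(q+1)/4, by omega⟩
  refine ⟨X ^ 2 - X + C (m : ℤ), ?_, ?_⟩
  · have h1 : (X ^ 2 - X + C (m : ℤ)) = X ^ 2 + (-X + C (m : ℤ)) := by ring
    rw [h1]
    apply Polynomial.monic_X_pow_add
    apply lt_of_le_of_lt (Polynomial.degree_add_le _ _)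
    apply max_lt
    · rw [Polynomial.degree_neg, Polynomial.degree_X]
      exact_mod_cast (by norm_num : (1:ℕ) < 2)
    · apply lt_of_le_of_lt Polynomial.degree_C_le
      exact_mod_cast (by norm_num : (0:ℕ) < 2)
  · simp only [eval₂_add, eval₂_sub, eval₂_pow, eval₂_X, eval₂_C]
    have h4 : ((q : K) + 1) = 4 * (m : K) := by exact_mod_cast congrArg (Nat.cast : ℕ → K) hm
    push_cast
    linear_combination (1/4 : K) * hα - (1/4 : K) * h4

/-- `(1+√-q)/2` as an algebraic integer. -/
noncomputable def betaR (hq4 : q % 4 = 3) (hα : α ^ 2 = -(q : K)) : 𝓞 K :=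
  ⟨(1 + α) / 2, aux_beta_integral hq4 hα⟩

@[simp] lemma betaR_coe (hq4 : q % 4 = 3) (hα : α ^ 2 = -(q : K)) :
    ((betaR hq4 hα : 𝓞 K) : K) = (1 + α) / 2 := rfl

/-- The restriction of `σ` to the ring of integers. -/
noncomputable def sigmaR (hq : q ≠ 0) (hdeg : Module.finrank ℚ K = 2)
    (hα : α ^ 2 = -(q : K)) : (𝓞 K) ≃ₐ[ℤ] (𝓞 K) :=
  galRestrict ℤ ℚ K (𝓞 K) (auxSigma hq hdeg hα)

lemma sigmaR_coe (hq : q ≠ 0) (hdeg : Module.finrank ℚ K = 2) (hα : α ^ 2 = -(q : K))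
    (x : 𝓞 K) : (algebraMap (𝓞 K) K) (sigmaR hq hdeg hα x) =
      auxSigma hq hdeg hα (algebraMap (𝓞 K) K x) :=
  algebraMap_galRestrict_apply ℤ _ x

lemma sigmaR_sigmaR (hq : q ≠ 0) (hdeg : Module.finrank ℚ K = 2) (hα : α ^ 2 = -(q : K))
    (x : 𝓞 K) : sigmaR hq hdeg hα (sigmaR hq hdeg hα x) = x := by
  apply RingOfIntegers.ext
  simp only [RingOfIntegers.coe_eq_algebraMap]
  rw [sigmaR_coe, sigmaR_coe, auxSigma_sq]

lemma sigmaR_alphaR (hq : q ≠ 0) (hdeg : Module.finrank ℚ K = 2) (hα : α ^ 2 = -(q : K)) :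
    sigmaR hq hdeg hα (alphaR hα) = -(alphaR hα) := by
  apply RingOfIntegers.ext
  simp only [RingOfIntegers.coe_eq_algebraMap]
  rw [sigmaR_coe, map_neg]
  have h1 : (algebraMap (𝓞 K) K) (alphaR hα) = α := rfl
  rw [h1, auxSigma_alpha hq hdeg hα]

lemma sigmaR_betaR (hq : q ≠ 0) (hq4 : q % 4 = 3) (hdeg : Module.finrank ℚ K = 2)
    (hα : α ^ 2 = -(q : K)) :
    sigmaR hq hdeg hα (betaR hq4 hα) = 1 - betaR hq4 hα := by
  apply RingOfIntegers.ext
  simp only [RingOfIntegers.coe_eq_algebraMap]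
  rw [sigmaR_coe, map_sub, map_one]
  have h1 : (algebraMap (𝓞 K) K) (betaR hq4 hα) = (1 + α) / 2 := rfl
  rw [h1, map_div₀, map_add, map_one, auxSigma_alpha hq hdeg hα]
  have h2 : auxSigma hq hdeg hα (2 : K) = 2 := map_ofNat _ 2
  rw [h2]
  ring

lemma aux_int_exists (z : K) (hz : IsIntegral ℤ z) (s : ℚ) (h : algebraMap ℚ K s = z) :
    ∃ m : ℤ, (m : ℚ) = s := by
  have hzs : IsIntegral ℤ s := by
    rw [← isIntegral_algebraMap_iff (algebraMap ℚ K).injective, h]; exact hz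
  obtain ⟨m, hm⟩ := IsIntegrallyClosed.isIntegral_iff.mp hzs
  exact ⟨m, by simpa using hm⟩

/-- A unit of the ring of integers that is a positive rational is 1. -/
lemma aux_unit_one (u : (𝓞 K)ˣ) (s : ℚ) (hs : 0 < s)
    (h : algebraMap (𝓞 K) K (u : 𝓞 K) = algebraMap ℚ K s) : (u : 𝓞 K) = 1 := by
  obtain ⟨m, hm⟩ := aux_int_exists _ (RingOfIntegers.isIntegral_coe (u : 𝓞 K)) s h.symm
  have hs0 : s ≠ 0 := ne_of_gt hs
  have hinv : algebraMap (𝓞 K) K ((u⁻¹ : (𝓞 K)ˣ) : 𝓞 K) = algebraMap ℚ K s⁻¹ := by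
    have h2 : algebraMap ℚ K s * algebraMap (𝓞 K) K ((u⁻¹ : (𝓞 K)ˣ) : 𝓞 K) = 1 := by
      rw [← h, ← map_mul, Units.mul_inv, map_one]
    rw [map_inv₀]
    exact (inv_eq_of_mul_eq_one_right h2).symm
  obtain ⟨m', hm'⟩ := aux_int_exists _ (RingOfIntegers.isIntegral_coe _) s⁻¹ hinv.symm
  have hmm : (m : ℚ) * (m' : ℚ) = 1 := by rw [hm, hm']; field_simp
  have hmm' : m * m' = 1 := by exact_mod_cast hmm
  have hu : IsUnit m := IsUnit.of_mul_eq_one _ hmm'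
  have : m = 1 ∨ m = -1 := Int.isUnit_iff.mp hu
  have hm1 : m = 1 := by
    rcases this with h1 | h1
    · exact h1
    · exfalso; rw [h1] at hm; rw [← hm] at hs; norm_num at hs
  have hs1 : s = 1 := by rw [← hm, hm1]; norm_num
  apply RingOfIntegers.coe_injective
  rw [h, hs1, map_one, map_one]
end RingInt
section IdealLayer
variable {q : ℕ} {α : K}

/-- σ as ring equivalence on the ring of integers. -/
noncomputable def sigmaE (hq : q ≠ 0) (hdeg : Module.finrank ℚ K = 2)
    (hα : α ^ 2 = -(q : K)) : (𝓞 K) ≃+* (𝓞 K) :=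
  (sigmaR hq hdeg hα).toRingEquiv

lemma sigmaE_apply (hq : q ≠ 0) (hdeg : Module.finrank ℚ K = 2) (hα : α ^ 2 = -(q : K))
    (x : 𝓞 K) : sigmaE hq hdeg hα x = sigmaR hq hdeg hα x := rfl

section SE
variable (hq : q ≠ 0) (hdeg : Module.finrank ℚ K = 2) (hα : α ^ 2 = -(q : K))
include hq hdeg hα

lemma sigmaE_sigmaE (x : 𝓞 K) : sigmaE hq hdeg hα (sigmaE hq hdeg hα x) = x :=
  sigmaR_sigmaR hq hdeg hα x

lemma map_sigmaE_map_sigmaE (I : Ideal (𝓞 K)) :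
    Ideal.map (sigmaE hq hdeg hα) (Ideal.map (sigmaE hq hdeg hα) I) = I := by
  have h : Ideal.map (sigmaE hq hdeg hα) (Ideal.map (sigmaE hq hdeg hα) I)
      = Ideal.map ((sigmaE hq hdeg hα).toRingHom.comp (sigmaE hq hdeg hα).toRingHom) I :=
    Ideal.map_map _ _
  rw [h]
  have h2 : ((sigmaE hq hdeg hα).toRingHom.comp (sigmaE hq hdeg hα).toRingHom)
      = RingHom.id (𝓞 K) := by
    ext x
    show ((sigmaE hq hdeg hα (sigmaE hq hdeg hα x) : 𝓞 K) : K) = (x : K)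
    exact congrArg _ (sigmaE_sigmaE hq hdeg hα x)
  rw [h2, Ideal.map_id]

lemma map_sigmaE_span (x : 𝓞 K) :
    Ideal.map (sigmaE hq hdeg hα) (Ideal.span {x}) = Ideal.span {sigmaE hq hdeg hα x} := by
  rw [Ideal.map_span, Set.image_singleton]

lemma sigmaE_natCast (n : ℕ) : sigmaE hq hdeg hα (n : 𝓞 K) = n := map_natCast _ n

lemma map_sigmaE_span_natCast (n : ℕ) :
    Ideal.map (sigmaE hq hdeg hα) (Ideal.span {(n : 𝓞 K)}) = Ideal.span {(n : 𝓞 K)} := by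
  rw [map_sigmaE_span, sigmaE_natCast]

lemma map_sigmaE_ne_bot {I : Ideal (𝓞 K)} (hI : I ≠ ⊥) :
    Ideal.map (sigmaE hq hdeg hα) I ≠ ⊥ := by
  intro h
  exact hI ((Ideal.map_eq_bot_iff_of_injective (sigmaE hq hdeg hα).injective).mp h)

lemma absNorm_map_sigmaE (I : Ideal (𝓞 K)) :
    Ideal.absNorm (Ideal.map (sigmaE hq hdeg hα) I) = Ideal.absNorm I := by
  rw [Ideal.absNorm_apply, Ideal.absNorm_apply, Submodule.cardQuot_apply,
    Submodule.cardQuot_apply]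
  exact (Nat.card_congr (Ideal.quotientEquiv I _ (sigmaE hq hdeg hα) rfl).toEquiv).symm

/-- Norm of the ideal generated by a natural number. -/
lemma absNorm_span_natCast (n : ℕ) :
    Ideal.absNorm (Ideal.span {(n : 𝓞 K)}) = n ^ 2 := by
  rw [Ideal.absNorm_span_singleton]
  have h1 : ((n : 𝓞 K)) = algebraMap ℤ (𝓞 K) (n : ℤ) := by push_cast; rfl
  rw [h1]
  have b := Module.Free.chooseBasis ℤ (𝓞 K)
  rw [Algebra.norm_algebraMap_of_basis b]
  rw [← Module.finrank_eq_card_chooseBasisIndex, NumberField.RingOfIntegers.rank K, hdeg]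
  simp [Int.natAbs_pow]

/-- Norm of the ideal generated by `√-q`. -/
lemma absNorm_span_alphaR : Ideal.absNorm (Ideal.span {alphaR hα}) = q := by
  have h1 : Ideal.span {alphaR hα} * Ideal.span {alphaR hα} = Ideal.span {(q : 𝓞 K)} := by
    rw [Ideal.span_singleton_mul_span_singleton, ← pow_two, alphaR_sq hα,
      Ideal.span_singleton_neg]
  have h2 := congrArg Ideal.absNorm h1
  rw [map_mul, absNorm_span_natCast hq hdeg hα] at h2
  have := Nat.mul_self_inj (m := Ideal.absNorm (Ideal.span {alphaR hα})) (n := q)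
  rw [← pow_two] at h2
  nlinarith [h2]

lemma map_sigmaE_span_alphaR :
    Ideal.map (sigmaE hq hdeg hα) (Ideal.span {alphaR hα}) = Ideal.span {alphaR hα} := by
  rw [map_sigmaE_span, sigmaE_apply, sigmaR_alphaR hq hdeg hα, Ideal.span_singleton_neg]
end SE
end IdealLayer
section Helpers
variable {q : ℕ} {α : K}
variable (hq : q ≠ 0) (hdeg : Module.finrank ℚ K = 2) (hα : α ^ 2 = -(q : K))
include hq hdeg hα

/-- Descent step: if an invariant ideal has an invariant principal divisor, the cofactor is
a smaller invariant ideal. -/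
lemma aux_descent {I D : Ideal (𝓞 K)}
    (ih : ∀ m, m < Ideal.absNorm I → ∀ J : Ideal (𝓞 K), Ideal.absNorm J = m → J ≠ ⊥ →
      Ideal.map (sigmaE hq hdeg hα) J = J → J.IsPrincipal)
    (hI0 : I ≠ ⊥) (hIσ : Ideal.map (sigmaE hq hdeg hα) I = I)
    (hD : D ∣ I) (hD0 : D ≠ ⊥) (hD2 : 2 ≤ Ideal.absNorm D)
    (hDσ : Ideal.map (sigmaE hq hdeg hα) D = D) (hDpr : D.IsPrincipal) :
    I.IsPrincipal := by
  obtain ⟨I₁, hI₁⟩ := hD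
  have hI₁0 : I₁ ≠ ⊥ := by
    rintro rfl
    rw [Ideal.mul_bot] at hI₁
    exact hI0 hI₁
  have hD0' : D ≠ (0 : Ideal (𝓞 K)) := by rwa [Ideal.zero_eq_bot]
  have hI₁σ : Ideal.map (sigmaE hq hdeg hα) I₁ = I₁ := by
    have h2 : I = D * Ideal.map (sigmaE hq hdeg hα) I₁ := by
      conv_lhs => rw [← hIσ, hI₁, Ideal.map_mul, hDσ]
    have h3 : D * Ideal.map (sigmaE hq hdeg hα) I₁ = D * I₁ := by rw [← h2, hI₁]
    exact mul_left_cancel₀ hD0' h3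
  have habs : Ideal.absNorm I = Ideal.absNorm D * Ideal.absNorm I₁ := by
    rw [hI₁, map_mul]
  have hI₁n0 : Ideal.absNorm I₁ ≠ 0 := by
    rw [Ne, Ideal.absNorm_eq_zero_iff]; exact hI₁0
  have hlt : Ideal.absNorm I₁ < Ideal.absNorm I := by
    rw [habs]
    have := Nat.pos_of_ne_zero hI₁n0
    nlinarith
  have hI₁pr : I₁.IsPrincipal := ih _ hlt I₁ rfl hI₁0 hI₁σ
  obtain ⟨g, hg⟩ := hDpr
  obtain ⟨g₁, hg₁⟩ := hI₁pr
  refine ⟨g * g₁, ?_⟩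
  rw [hI₁, hg, hg₁]
  show Ideal.span {g} * Ideal.span {g₁} = Ideal.span {g * g₁}
  exact Ideal.span_singleton_mul_span_singleton g g₁

/-- The key norm equality from an equation `(x)·σI = (y)·I`. -/
lemma aux_norm_eq {I : Ideal (𝓞 K)} (hI0 : I ≠ ⊥) {x y : 𝓞 K} (hx : x ≠ 0) (hy : y ≠ 0)
    (h : Ideal.span {x} * Ideal.map (sigmaE hq hdeg hα) I = Ideal.span {y} * I) :
    y * sigmaE hq hdeg hα y = x * sigmaE hq hdeg hα x := by
  set σ := sigmaE hq hdeg hα with hσdef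
  set Iσ := Ideal.map σ I with hIσdef
  have hIσ0 : Iσ ≠ ⊥ := map_sigmaE_ne_bot hq hdeg hα hI0
  -- apply σ to the relation
  have h2 : Ideal.span {σ x} * I = Ideal.span {σ y} * Iσ := by
    have := congrArg (Ideal.map σ) h
    rw [Ideal.map_mul, Ideal.map_mul, map_sigmaE_span, map_sigmaE_span,
      map_sigmaE_map_sigmaE] at this
    exact this
  have h3 : Ideal.span {x * σ x} * (I * Iσ) = Ideal.span {y * σ y} * (I * Iσ) := by
    calc Ideal.span {x * σ x} * (I * Iσ)
        = (Ideal.span {x} * Iσ) * (Ideal.span {σ x} * I) := by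
          rw [← Ideal.span_singleton_mul_span_singleton]; ring
      _ = (Ideal.span {y} * I) * (Ideal.span {σ y} * Iσ) := by rw [h, h2]
      _ = Ideal.span {y * σ y} * (I * Iσ) := by
          rw [← Ideal.span_singleton_mul_span_singleton]; ring
  have hIIσ0 : I * Iσ ≠ (0 : Ideal (𝓞 K)) := by
    rw [Ideal.zero_eq_bot]
    exact mul_ne_zero (by rwa [← Ideal.zero_eq_bot] at hI0) (by rwa [← Ideal.zero_eq_bot] at hIσ0)
  have h4 : Ideal.span {x * σ x} = Ideal.span {y * σ y} := by
    have := mul_right_cancel₀ hIIσ0 h3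
    exact this
  have h5 : Associated (x * σ x) (y * σ y) := Ideal.span_singleton_eq_span_singleton.mp h4
  obtain ⟨u, hu⟩ := h5
  -- positivity
  have hxK : (algebraMap (𝓞 K) K) x ≠ 0 := by
    rw [RingOfIntegers.coe_ne_zero_iff]; exact hx
  have hyK : (algebraMap (𝓞 K) K) y ≠ 0 := by
    rw [RingOfIntegers.coe_ne_zero_iff]; exact hy
  obtain ⟨rx, hrx, hrx2⟩ := aux_pos hq hdeg hα hxK
  obtain ⟨ry, hry, hry2⟩ := aux_pos hq hdeg hα hyK
  have hcx : algebraMap (𝓞 K) K (x * σ x) = algebraMap ℚ K rx := by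
    rw [map_mul, hσdef, sigmaE_apply, sigmaR_coe hq hdeg hα]
    exact hrx2
  have hcy : algebraMap (𝓞 K) K (y * σ y) = algebraMap ℚ K ry := by
    rw [map_mul, hσdef, sigmaE_apply, sigmaR_coe hq hdeg hα]
    exact hry2
  -- the unit is a positive rational, hence 1
  have huK : algebraMap (𝓞 K) K (u : 𝓞 K) = algebraMap ℚ K (ry / rx) := by
    have h6 := congrArg (algebraMap (𝓞 K) K) hu
    rw [map_mul, hcx, hcy] at h6
    have hrx0 : (algebraMap ℚ K) rx ≠ 0 := by
      simpa using hrx.ne'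
    rw [map_div₀, eq_div_iff hrx0, mul_comm]
    exact h6
  have hu1 : (u : 𝓞 K) = 1 := aux_unit_one u (ry / rx) (div_pos hry hrx) huK
  rw [hu1, mul_one] at hu
  exact hu.symm
end Helpers
section MainLemma
variable {q : ℕ} {α : K}
variable (hqp : q.Prime) (hq4 : q % 4 = 3) (hq : q ≠ 0)
  (hdeg : Module.finrank ℚ K = 2) (hα : α ^ 2 = -(q : K))
include hqp hq4 hq hdeg hα

/-- Every nonzero σ-invariant ideal of the ring of integers is principal. -/
lemma aux_invariant_principal :
    ∀ n : ℕ, ∀ I : Ideal (𝓞 K), Ideal.absNorm I = n → I ≠ ⊥ →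
      Ideal.map (sigmaE hq hdeg hα) I = I → I.IsPrincipal := by
  intro n
  induction n using Nat.strong_induction_on with
  | _ n ih =>
  intro I hIn hI0 hIσ
  by_cases hItop : I = ⊤
  · exact ⟨1, by rw [hItop]; exact (Ideal.span_singleton_one).symm⟩
  obtain ⟨P, hPmax, hIP⟩ := Ideal.exists_le_maximal I hItop
  haveI : P.IsMaximal := hPmax
  haveI hPprime : P.IsPrime := hPmax.isPrime
  have hP0 : P ≠ ⊥ := by
    rintro rfl
    exact hI0 (le_bot_iff.mp hIP)
  have hPdvdI : P ∣ I := Ideal.dvd_iff_le.mpr hIP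
  -- the residue characteristic
  have hPn0 : Ideal.absNorm P ≠ 0 := by
    rw [Ne, Ideal.absNorm_eq_zero_iff]; exact hP0
  have hfin : Finite (𝓞 K ⧸ P) := by
    rw [Ideal.absNorm_apply, Submodule.cardQuot_apply] at hPn0
    exact Nat.finite_of_card_ne_zero hPn0
  haveI := Fintype.ofFinite (𝓞 K ⧸ P)
  obtain ⟨p, hcp⟩ := CharP.exists (𝓞 K ⧸ P)
  haveI := hcp
  have hp : p.Prime := CharP.char_is_prime (𝓞 K ⧸ P) p
  have hpP : (p : 𝓞 K) ∈ P := by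
    rw [← Ideal.Quotient.eq_zero_iff_mem]
    have h1 : (Ideal.Quotient.mk P) ((p : ℕ) : 𝓞 K) = ((p : ℕ) : 𝓞 K ⧸ P) := map_natCast _ p
    rw [h1]
    exact CharP.cast_eq_zero _ p
  have hPdvdp : P ∣ Ideal.span {(p : 𝓞 K)} := by
    rw [Ideal.dvd_iff_le, Ideal.span_le, Set.singleton_subset_iff]
    exact hpP
  have hnormp : Ideal.absNorm (Ideal.span {(p : 𝓞 K)}) = p ^ 2 :=
    absNorm_span_natCast hq hdeg hα p
  have hNdvd : Ideal.absNorm P ∣ p ^ 2 := by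
    obtain ⟨C, hC⟩ := hPdvdp
    exact ⟨Ideal.absNorm C, by rw [← hnormp, hC, map_mul]⟩
  obtain ⟨k, hk2, hNk⟩ := (Nat.dvd_prime_pow hp).mp hNdvd
  have hk0 : k ≠ 0 := by
    rintro rfl
    rw [pow_zero, Ideal.absNorm_eq_one_iff] at hNk
    exact hPmax.ne_top hNk
  -- helper to finish once we have an invariant principal divisor
  have finish : ∀ D : Ideal (𝓞 K), D ∣ I → D ≠ ⊥ → 2 ≤ Ideal.absNorm D →
      Ideal.map (sigmaE hq hdeg hα) D = D → D.IsPrincipal → I.IsPrincipal := by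
    intro D h1 h2 h3 h4 h5
    subst hIn
    exact aux_descent hq hdeg hα (fun m hm J hJ hJ0 hJσ => ih m hm J hJ hJ0 hJσ)
      hI0 hIσ h1 h2 h3 h4 h5
  -- Case absNorm P = p ^ 2 : P = (p)
  rcases (by omega : k = 2 ∨ k = 1) with hk | hk
  · subst hk
    have hPeq : P = Ideal.span {(p : 𝓞 K)} := by
      obtain ⟨C, hC⟩ := hPdvdp
      have h6 := congrArg Ideal.absNorm hC
      rw [map_mul, hnormp, hNk] at h6
      have hppos : 0 < p ^ 2 := pow_pos hp.pos 2
      have hC1 : Ideal.absNorm C = 1 :=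
        Nat.eq_of_mul_eq_mul_left hppos (by rw [mul_one]; exact h6.symm)
      rw [Ideal.absNorm_eq_one_iff] at hC1
      rw [hC, hC1, Ideal.mul_top]
    refine finish P hPdvdI hP0 ?_ ?_ ?_
    · rw [hNk]; nlinarith [hp.two_le]
    · rw [hPeq]; exact map_sigmaE_span_natCast hq hdeg hα p
    · exact ⟨_, hPeq⟩
  · subst hk
    rw [pow_one] at hNk
    -- surjectivity of ℤ onto the residue field
    have hcard : Fintype.card (𝓞 K ⧸ P) = p := by
      rw [← Nat.card_eq_fintype_card, ← Submodule.cardQuot_apply, ← Ideal.absNorm_apply, hNk]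
    have hsurj : ∀ t : 𝓞 K ⧸ P, ∃ a : ℤ, ((a : ℤ) : 𝓞 K ⧸ P) = t := by
      intro t
      let e := ZMod.ringEquiv (𝓞 K ⧸ P) hcard
      obtain ⟨z, hz⟩ := ZMod.intCast_surjective (e.symm t)
      refine ⟨z, ?_⟩
      have : e ((z : ZMod p)) = ((z : ℤ) : 𝓞 K ⧸ P) := map_intCast e z
      rw [← this, hz, RingEquiv.apply_symm_apply]
    by_cases hPσ : Ideal.map (sigmaE hq hdeg hα) P = P
    · -- σ-invariant prime: inert or ramified
      -- reduce mod P using an integer representative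
      have hmem : ∀ x : 𝓞 K, x ∈ P → sigmaE hq hdeg hα x ∈ P := by
        intro x hx
        rw [← hPσ]
        exact Ideal.mem_map_of_mem _ hx
      have hintP : ∀ a : ℤ, ((a : ℤ) : 𝓞 K ⧸ P) = 0 → ((a : ℤ) : 𝓞 K) ∈ P := by
        intro a ha
        rw [← Ideal.Quotient.eq_zero_iff_mem]
        rw [map_intCast]
        exact ha
      by_cases hp2 : p = 2
      · -- p = 2 : contradiction via β = (1+α)/2
        exfalso
        subst hp2
        obtain ⟨a, ha⟩ := hsurj ((Ideal.Quotient.mk P) (betaR hq4 hα))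
        have hmemβ : betaR hq4 hα - (a : 𝓞 K) ∈ P := by
          rw [← Ideal.Quotient.eq_zero_iff_mem, map_sub, ← ha, map_intCast, sub_self]
        have h1P : (1 : 𝓞 K) ∉ P := hPmax.ne_top ∘ (Ideal.eq_top_iff_one P).mpr
        have hβcases : betaR hq4 hα ∈ P ∨ betaR hq4 hα - 1 ∈ P := by
          rcases Int.even_or_odd a with ⟨b, hb⟩ | ⟨b, hb⟩
          · left
            have h2b : ((a : ℤ) : 𝓞 K) ∈ P := by
              have : ((a : ℤ) : 𝓞 K) = ((2 : ℕ) : 𝓞 K) * (b : 𝓞 K) := by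
                rw [hb]; push_cast; ring
              rw [this]
              exact Ideal.mul_mem_right _ _ hpP
            have := Ideal.add_mem P hmemβ h2b
            simpa using this
          · right
            have h2b : ((a : ℤ) : 𝓞 K) - 1 ∈ P := by
              have : ((a : ℤ) : 𝓞 K) - 1 = ((2 : ℕ) : 𝓞 K) * (b : 𝓞 K) := by
                rw [hb]; push_cast; ring
              rw [this]
              exact Ideal.mul_mem_right _ _ hpP
            have := Ideal.add_mem P hmemβ h2b
            simpa [sub_add_sub_comm] using this
        rcases hβcases with hβ | hβ
        · have hσβ := hmem _ hβ
          rw [sigmaE_apply, sigmaR_betaR hq hq4 hdeg hα] at hσβ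
          have h7 := Ideal.add_mem P hβ hσβ
          have e : betaR hq4 hα + (1 - betaR hq4 hα) = 1 := by ring
          rw [e] at h7
          exact h1P h7
        · have hσβ := hmem _ hβ
          rw [sigmaE_apply, map_sub, sigmaR_betaR hq hq4 hdeg hα, map_one] at hσβ
          -- σ(β) - 1 = -β
          have hσβ' : -(betaR hq4 hα) ∈ P := by
            have : (1 - betaR hq4 hα) - 1 = -(betaR hq4 hα) := by ring
            rwa [this] at hσβ
          have hβP : betaR hq4 hα ∈ P := by simpa using Submodule.neg_mem P hσβ'
          have := Ideal.add_mem P (Submodule.neg_mem P hβP) hβ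
          have h1 : (-1 : 𝓞 K) ∈ P := by
            have e1 : -(betaR hq4 hα) + (betaR hq4 hα - 1) = -1 := by ring
            rwa [e1] at this
          exact h1P (by simpa using Submodule.neg_mem P h1)
      · -- p odd, invariant: forces p = q and P = (√-q)
        obtain ⟨a, ha⟩ := hsurj ((Ideal.Quotient.mk P) (alphaR hα))
        have hmemα : alphaR hα - (a : 𝓞 K) ∈ P := by
          rw [← Ideal.Quotient.eq_zero_iff_mem, map_sub, ← ha, map_intCast, sub_self]
        have hσα := hmem _ hmemα
        rw [sigmaE_apply, map_sub, sigmaR_alphaR hq hdeg hα, map_intCast] at hσα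
        -- sum : -2a ∈ P
        have h2a : ((2 * a : ℤ) : 𝓞 K) ∈ P := by
          have := Ideal.add_mem P hmemα hσα
          have e1 : (alphaR hα - (a : 𝓞 K)) + (-(alphaR hα) - (a : 𝓞 K))
              = -((2 * a : ℤ) : 𝓞 K) := by push_cast; ring
          rw [e1] at this
          simpa using Submodule.neg_mem P this
        have hdvd2a : (p : ℤ) ∣ 2 * a := by
          rw [← CharP.intCast_eq_zero_iff (𝓞 K ⧸ P) p]
          rw [← Ideal.Quotient.eq_zero_iff_mem] at h2a
          rw [map_intCast] at h2a
          exact h2a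
        have hpa : (p : ℤ) ∣ a := by
          have hpint : Prime (p : ℤ) := Nat.prime_iff_prime_int.mp hp
          rcases hpint.2.2 _ _ hdvd2a with h | h
          · exfalso
            have : (p : ℤ) ∣ 2 := h
            have hp2' : p ∣ 2 := by exact_mod_cast this
            exact hp2 ((Nat.prime_dvd_prime_iff_eq hp Nat.prime_two).mp hp2')
          · exact h
        have haP : ((a : ℤ) : 𝓞 K) ∈ P := by
          obtain ⟨b, hb⟩ := hpa
          have : ((a : ℤ) : 𝓞 K) = ((p : ℕ) : 𝓞 K) * ((b : ℤ) : 𝓞 K) := by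
            rw [hb]; push_cast; ring
          rw [this]
          exact Ideal.mul_mem_right _ _ hpP
        have hαP : alphaR hα ∈ P := by
          have := Ideal.add_mem P hmemα haP
          simpa using this
        have hqP : ((q : ℕ) : 𝓞 K) ∈ P := by
          have h1 : (alphaR hα) * (alphaR hα) ∈ P := Ideal.mul_mem_right _ _ hαP
          rw [← pow_two, alphaR_sq hα] at h1
          simpa using Submodule.neg_mem P h1
        have hpq : p ∣ q := by
          rw [← CharP.cast_eq_zero_iff (𝓞 K ⧸ P) p]
          rw [← Ideal.Quotient.eq_zero_iff_mem] at hqP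
          rw [map_natCast] at hqP
          exact hqP
        have hpq' : p = q := (Nat.prime_dvd_prime_iff_eq hp hqp).mp hpq
        -- P = span {alphaR}
        have hPdvdα : P ∣ Ideal.span {alphaR hα} := by
          rw [Ideal.dvd_iff_le, Ideal.span_le, Set.singleton_subset_iff]
          exact hαP
        have hPeq : P = Ideal.span {alphaR hα} := by
          obtain ⟨C, hC⟩ := hPdvdα
          have h6 := congrArg Ideal.absNorm hC
          rw [map_mul, absNorm_span_alphaR hq hdeg hα, hNk, hpq'] at h6
          have hC1 : Ideal.absNorm C = 1 :=
            Nat.eq_of_mul_eq_mul_left hqp.pos (by rw [mul_one]; exact h6.symm)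
          rw [Ideal.absNorm_eq_one_iff] at hC1
          rw [hC, hC1, Ideal.mul_top]
        refine finish P hPdvdI hP0 ?_ ?_ ?_
        · rw [hNk]; exact hp.two_le
        · exact hPσ
        · exact ⟨_, hPeq⟩
    · -- split prime: D = P * σP = (p)
      set σ := sigmaE hq hdeg hα with hσdef
      set Pσ := Ideal.map σ P with hPσdef
      haveI hPσprime : Pσ.IsPrime := Ideal.map_isPrime_of_equiv σ
      have hPσ0 : Pσ ≠ ⊥ := map_sigmaE_ne_bot hq hdeg hα hP0
      have hPσprime' : Prime Pσ := Ideal.prime_of_isPrime hPσ0 hPσprime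
      have hne : Pσ ≠ P := hPσ
      have hnotdvd : ¬ Pσ ∣ P := by
        intro h
        apply hne
        have hle : P ≤ Pσ := Ideal.le_of_dvd h
        have : Pσ ≠ ⊤ := hPσprime.ne_top
        exact (hPmax.eq_of_le this hle).symm
      -- Pσ ∣ (p)
      have hPσdvdp : Pσ ∣ Ideal.span {(p : 𝓞 K)} := by
        have h2 : Ideal.span {(p : 𝓞 K)} ≤ Pσ := by
          rw [← map_sigmaE_span_natCast hq hdeg hα p]
          exact Ideal.map_mono (Ideal.dvd_iff_le.mp hPdvdp)
        rw [Ideal.dvd_iff_le]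
        exact h2
      have hDdvdp : P * Pσ ∣ Ideal.span {(p : 𝓞 K)} := by
        obtain ⟨C, hC⟩ := hPdvdp
        have : Pσ ∣ C := by
          rcases hPσprime'.2.2 _ _ (hC ▸ hPσdvdp) with h | h
          · exact absurd h hnotdvd
          · exact h
        obtain ⟨C', hC'⟩ := this
        exact ⟨C', by rw [hC, hC', mul_assoc]⟩
      have hDnorm : Ideal.absNorm (P * Pσ) = p ^ 2 := by
        rw [map_mul, absNorm_map_sigmaE hq hdeg hα, hNk]; ring
      have hDeq : P * Pσ = Ideal.span {(p : 𝓞 K)} := by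
        obtain ⟨C, hC⟩ := hDdvdp
        have h6 := congrArg Ideal.absNorm hC
        rw [map_mul, hDnorm, hnormp] at h6
        have hppos : 0 < p ^ 2 := pow_pos hp.pos 2
        have hC1 : Ideal.absNorm C = 1 :=
          Nat.eq_of_mul_eq_mul_left hppos (by rw [mul_one]; exact h6.symm)
        rw [Ideal.absNorm_eq_one_iff] at hC1
        rw [hC, hC1, Ideal.mul_top]
      -- P * Pσ divides I
      have hPσdvdI : Pσ ∣ I := by
        rw [Ideal.dvd_iff_le]
        calc I = Ideal.map σ I := hIσ.symm
          _ ≤ Pσ := Ideal.map_mono hIP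
      have hDdvdI : P * Pσ ∣ I := by
        obtain ⟨C, hC⟩ := hPdvdI
        have : Pσ ∣ C := by
          rcases hPσprime'.2.2 _ _ (hC ▸ hPσdvdI) with h | h
          · exact absurd h hnotdvd
          · exact h
        obtain ⟨C', hC'⟩ := this
        exact ⟨C', by rw [hC, hC', mul_assoc]⟩
      refine finish (P * Pσ) hDdvdI ?_ ?_ ?_ ?_
      · rw [Ne, Ideal.zero_eq_bot.symm]
        exact mul_ne_zero (by rwa [← Ideal.zero_eq_bot] at hP0)
          (by rwa [← Ideal.zero_eq_bot] at hPσ0)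
      · rw [hDnorm]; nlinarith [hp.two_le]
      · have h8 : Ideal.map σ Pσ = P := map_sigmaE_map_sigmaE hq hdeg hα P
        rw [Ideal.map_mul, h8, ← hPσdef]
        exact mul_comm Pσ P
      · exact ⟨_, hDeq⟩
end MainLemma
section Final
variable {q : ℕ} {α : K}

lemma aux_sq_one_eq_one (hqp : q.Prime) (hq4 : q % 4 = 3) (hq : q ≠ 0)
    (hdeg : Module.finrank ℚ K = 2) (hα : α ^ 2 = -(q : K))
    (c : ClassGroup (𝓞 K)) (hc2 : c ^ 2 = 1) : c = 1 := by
  obtain ⟨I0, hI0⟩ := ClassGroup.mk0_surjective c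
  set σ := sigmaE hq hdeg hα with hσdef
  have hI0ne : (I0 : Ideal (𝓞 K)) ≠ 0 := mem_nonZeroDivisors_iff_ne_zero.mp I0.2
  have hI0bot : (I0 : Ideal (𝓞 K)) ≠ ⊥ := by rwa [← Ideal.zero_eq_bot]
  have hIσbot : Ideal.map σ (I0 : Ideal (𝓞 K)) ≠ ⊥ := map_sigmaE_ne_bot hq hdeg hα hI0bot
  have hIσmem : Ideal.map σ (I0 : Ideal (𝓞 K)) ∈ nonZeroDivisors (Ideal (𝓞 K)) :=
    mem_nonZeroDivisors_iff_ne_zero.mpr (by rwa [Ideal.zero_eq_bot])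
  set Iσ : (nonZeroDivisors (Ideal (𝓞 K))) := ⟨Ideal.map σ (I0 : Ideal (𝓞 K)), hIσmem⟩
    with hIσdef
  -- I * σI is invariant, hence principal
  have hprod_inv : Ideal.map σ ((I0 : Ideal (𝓞 K)) * (Iσ : Ideal (𝓞 K)))
      = (I0 : Ideal (𝓞 K)) * (Iσ : Ideal (𝓞 K)) := by
    rw [Ideal.map_mul]
    rw [hIσdef]
    show Ideal.map σ (I0 : Ideal (𝓞 K)) * Ideal.map σ (Ideal.map σ (I0 : Ideal (𝓞 K))) = _
    rw [map_sigmaE_map_sigmaE hq hdeg hα]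
    exact mul_comm _ _
  have hprod_ne : (I0 : Ideal (𝓞 K)) * (Iσ : Ideal (𝓞 K)) ≠ ⊥ := by
    rw [← Ideal.zero_eq_bot]
    exact mul_ne_zero hI0ne (mem_nonZeroDivisors_iff_ne_zero.mp Iσ.2)
  have hprod_pr : ((I0 : Ideal (𝓞 K)) * (Iσ : Ideal (𝓞 K))).IsPrincipal :=
    aux_invariant_principal hqp hq4 hq hdeg hα _ _ rfl hprod_ne hprod_inv
  have hmk_prod : ClassGroup.mk0 (I0 * Iσ) = 1 := by
    rw [ClassGroup.mk0_eq_one_iff]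
    exact hprod_pr
  have hmkIσ : ClassGroup.mk0 Iσ = c := by
    rw [map_mul, hI0] at hmk_prod
    calc ClassGroup.mk0 Iσ = c⁻¹ := by
          rw [eq_inv_iff_mul_eq_one, mul_comm]; exact hmk_prod
      _ = c := by
          rw [inv_eq_iff_mul_eq_one, ← pow_two]; exact hc2
  -- get the relation (x) σI = (y) I
  obtain ⟨x, y, hx, hy, hrel⟩ := ClassGroup.mk0_eq_mk0_iff.mp (hmkIσ.trans hI0.symm)
  by_cases hxy : x + y = 0
  · -- then σI = I, so I itself is invariant
    have hxe : x = -y := by rwa [add_eq_zero_iff_eq_neg] at hxy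
    have hIσI : (Iσ : Ideal (𝓞 K)) = (I0 : Ideal (𝓞 K)) := by
      have h1 : Ideal.span {x} = Ideal.span {y} := by rw [hxe, Ideal.span_singleton_neg]
      rw [h1] at hrel
      have hy0 : Ideal.span {y} ≠ (0 : Ideal (𝓞 K)) := by
        rw [Ideal.zero_eq_bot, Ne, Ideal.span_singleton_eq_bot]; exact hy
      exact mul_left_cancel₀ hy0 hrel
    have hinv : Ideal.map σ (I0 : Ideal (𝓞 K)) = I0 := hIσI
    have hpr := aux_invariant_principal hqp hq4 hq hdeg hα _ _ rfl hI0bot hinv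
    rw [← hI0, ClassGroup.mk0_eq_one_iff]
    exact hpr
  · -- Hilbert 90 trick
    have hkey : y * σ y = x * σ x := aux_norm_eq hq hdeg hα hI0bot hx hy hrel
    set g : 𝓞 K := σ x * (x + y) with hgdef
    have hg0 : g ≠ 0 := mul_ne_zero (by simpa using (map_ne_zero_iff σ σ.injective).mpr hx) hxy
    set J : Ideal (𝓞 K) := Ideal.span {g} * (I0 : Ideal (𝓞 K)) with hJdef
    have hJne : J ≠ ⊥ := by
      rw [hJdef, ← Ideal.zero_eq_bot]
      apply mul_ne_zero _ hI0ne
      rw [Ideal.zero_eq_bot, Ne, Ideal.span_singleton_eq_bot]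
      exact hg0
    have hJinv : Ideal.map σ J = J := by
      rw [hJdef, Ideal.map_mul, map_sigmaE_span hq hdeg hα]
      have hσg : σ g = x * (σ x + σ y) := by
        rw [hgdef, map_mul, map_add, sigmaE_sigmaE hq hdeg hα]
      rw [hσg]
      have hstep : Ideal.span {x * (σ x + σ y)} * Ideal.map σ (I0 : Ideal (𝓞 K))
          = Ideal.span {σ x + σ y} * (Ideal.span {x} * Ideal.map σ (I0 : Ideal (𝓞 K))) := by
        rw [← mul_assoc, Ideal.span_singleton_mul_span_singleton, mul_comm (σ x + σ y) x]
      rw [hstep, hrel, ← mul_assoc, Ideal.span_singleton_mul_span_singleton]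
      have hgen : (σ x + σ y) * y = g := by
        rw [hgdef]
        linear_combination hkey
      rw [hgen]
    have hJpr : J.IsPrincipal :=
      aux_invariant_principal hqp hq4 hq hdeg hα _ _ rfl hJne hJinv
    -- J has the same class as I0
    have hJmem : J ∈ nonZeroDivisors (Ideal (𝓞 K)) :=
      mem_nonZeroDivisors_iff_ne_zero.mpr (by rwa [Ideal.zero_eq_bot])
    have hgmem : Ideal.span {g} ∈ nonZeroDivisors (Ideal (𝓞 K)) := by
      apply mem_nonZeroDivisors_iff_ne_zero.mpr
      rw [Ideal.zero_eq_bot, Ne, Ideal.span_singleton_eq_bot]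
      exact hg0
    have hJc : ClassGroup.mk0 ⟨J, hJmem⟩ = c := by
      have hJsplit : (⟨J, hJmem⟩ : nonZeroDivisors (Ideal (𝓞 K)))
          = ⟨Ideal.span {g}, hgmem⟩ * I0 := by
        apply Subtype.ext
        rfl
      rw [hJsplit, map_mul, hI0]
      have : ClassGroup.mk0 ⟨Ideal.span {g}, hgmem⟩ = 1 := by
        rw [ClassGroup.mk0_eq_one_iff]
        exact ⟨g, rfl⟩
      rw [this, one_mul]
    rw [← hJc, ClassGroup.mk0_eq_one_iff]
    exact hJpr
end Final
/-- For every prime `q` with `q ≡ 3 (mod 4)`, the class number of the imaginary quadratic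
field `ℚ(√−q)` (formalized as any degree-2 number field containing a square root of `−q`)
is odd. -/
theorem odd_classNumber_of_sqrt_neg_prime_three_mod_four
    (q : ℕ) (hq : q.Prime) (hq4 : q % 4 = 3)
    (K : Type) [Field K] [NumberField K]
    (hdeg : Module.finrank ℚ K = 2)
    (α : K) (hα : α ^ 2 = -(q : K)) :
    Odd (NumberField.classNumber K) := by
  have hq0 : q ≠ 0 := hq.ne_zero
  by_contra hodd
  rw [Nat.odd_iff] at hodd
  have heven : 2 ∣ NumberField.classNumber K := by omega
  have hcardeq : NumberField.classNumber K = Fintype.card (ClassGroup (𝓞 K)) := rfl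
  rw [hcardeq] at heven
  haveI : Fact (Nat.Prime 2) := ⟨Nat.prime_two⟩
  obtain ⟨c, hc⟩ := exists_prime_orderOf_dvd_card (G := ClassGroup (𝓞 K)) 2 heven
  have hc2 : c ^ 2 = 1 := by rw [← hc]; exact pow_orderOf_eq_one c
  have hc1 : c ≠ 1 := by
    intro h; rw [h, orderOf_one] at hc; norm_num at hc
  exact hc1 (aux_sq_one_eq_one hq hq4 hq0 hdeg hα c hc2)
end

section
/- Let Δ be a fundamental discriminant and N ≥ 1 an integer. If ℚ(√Δ) is contained in the cyclotomic field ℚ(ζ_N) (i.e., some element of ℚ(ζ_N) has square Δ), then |Δ| divides N. In particular |Δ| is the conductor of the quadratic field ℚ(√Δ). -/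
/-- An integer `Δ ≠ 1` is a fundamental discriminant if either `Δ ≡ 1 (mod 4)` and `Δ` is
squarefree, or `Δ = 4m` where `m` is a squarefree integer with `m ≡ 2` or `3 (mod 4)`. -/
def IsFundamentalDiscriminant (Δ : ℤ) : Prop :=
  Δ ≠ 1 ∧ ((Δ % 4 = 1 ∧ Squarefree Δ) ∨
    ∃ m : ℤ, Δ = 4 * m ∧ Squarefree m ∧ (m % 4 = 2 ∨ m % 4 = 3))

open Polynomial
open scoped Cyclotomic

noncomputable def qstar (q : ℕ) : ℤ :=
  if h : q.Prime then
    letI : Fact q.Prime := ⟨h⟩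
    (quadraticChar (ZMod q) (-1)) * q
  else 0

lemma qstar_def (q : ℕ) [hq : Fact q.Prime] :
    qstar q = (quadraticChar (ZMod q) (-1)) * q := by
  rw [qstar, dif_pos hq.out]

lemma quadChar_neg_one_cases (q : ℕ) [hq : Fact q.Prime] :
    quadraticChar (ZMod q) (-1) = 1 ∨ quadraticChar (ZMod q) (-1) = -1 := by
  have : ((-1 : ZMod q)) ≠ 0 := by
    simp only [ne_eq, neg_eq_zero, one_ne_zero, not_false_eq_true]
  exact quadraticChar_dichotomy this

lemma qstar_natAbs (q : ℕ) [hq : Fact q.Prime] : (qstar q).natAbs = q := by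
  rw [qstar_def]
  rcases quadChar_neg_one_cases q with h | h <;> simp [h]

lemma qstar_cast_zmod4 (q : ℕ) [hq : Fact q.Prime] (h2 : q ≠ 2) :
    ((qstar q : ℤ) : ZMod 4) = 1 := by
  have hchar : ringChar (ZMod q) ≠ 2 := by
    rw [ZMod.ringChar_zmod_n]; exact h2
  have hodd : q % 2 = 1 := (Nat.Prime.mod_two_eq_one_iff_ne_two hq.out).mpr h2
  have hmod : q % 4 = 1 ∨ q % 4 = 3 := by omega
  rw [qstar_def, quadraticChar_neg_one hchar, ZMod.card, ZMod.χ₄_nat_eq_if_mod_four]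
  rcases hmod with h | h
  · obtain ⟨k, hk⟩ : ∃ k, q = 4 * k + 1 := ⟨q / 4, by omega⟩
    rw [if_neg (by omega), if_pos h]
    push_cast [hk]
    simp [show ((4:ZMod 4)) = 0 by decide]
  · obtain ⟨k, hk⟩ : ∃ k, q = 4 * k + 3 := ⟨q / 4, by omega⟩
    rw [if_neg (by omega), if_neg (by omega)]
    push_cast [hk]
    simp [show ((4:ZMod 4)) = 0 by decide]
    decide

/-- Totalized quadratic Gauss sum attached to `e` (intended: a primitive `q`-th root of 1). -/
noncomputable def gAux {K : Type*} [Field K] (e : K) (q : ℕ) : K :=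
  if h : q.Prime then
    letI : Fact q.Prime := ⟨h⟩
    ∑ x : ZMod q, ((quadraticChar (ZMod q) x : ℤ) : K) * e ^ x.val
  else 0

lemma gAux_eq_gaussSum {K : Type*} [Field K] {e : K} (q : ℕ) [hq : Fact q.Prime]
    (he : e ^ q = 1) :
    gAux e q = gaussSum ((quadraticChar (ZMod q)).ringHomComp (Int.castRingHom K))
      (AddChar.zmodChar q he) := by
  rw [gAux, dif_pos hq.out, gaussSum]
  refine Finset.sum_congr rfl fun x _ => ?_
  rw [MulChar.ringHomComp_apply, AddChar.zmodChar_apply]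
  simp

lemma gAux_sq {K : Type*} [Field K] [CharZero K] {e : K} (q : ℕ) [hq : Fact q.Prime]
    (h2 : q ≠ 2) (he : IsPrimitiveRoot e q) :
    gAux e q ^ 2 = ((qstar q : ℤ) : K) := by
  have hchar : ringChar (ZMod q) ≠ 2 := by rw [ZMod.ringChar_zmod_n]; exact h2
  rw [gAux_eq_gaussSum q he.pow_eq_one, gaussSum_sq
      ((MulChar.ringHomComp_ne_one_iff (RingHom.injective_int _)).mpr (quadraticChar_ne_one hchar))
      ((quadraticChar_isQuadratic (ZMod q)).comp _)
      (AddChar.zmodChar_primitive_of_primitive_root q he)]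
  rw [qstar_def, MulChar.ringHomComp_apply, ZMod.card]
  rw [eq_intCast]
  push_cast
  ring

lemma gAux_map {K : Type*} [Field K] {e : K} (q : ℕ) [hq : Fact q.Prime]
    (he : e ^ q = 1) (f : K →+* K) (t : ℕ) (hf : f e = e ^ t) (ht : Nat.Coprime t q) :
    f (gAux e q) = ((quadraticChar (ZMod q) ((t : ZMod q)) : ℤ) : K) * gAux e q := by
  classical
  set χ := (quadraticChar (ZMod q)).ringHomComp (Int.castRingHom K) with hχ
  set ψ := AddChar.zmodChar q he with hψ
  have key : f (gaussSum χ ψ) = gaussSum χ (AddChar.mulShift ψ ((t : ZMod q))) := by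
    rw [gaussSum, map_sum, gaussSum]
    refine Finset.sum_congr rfl fun x _ => ?_
    rw [AddChar.mulShift_apply]
    have h1 : f (χ x) = χ x := by
      rw [hχ, MulChar.ringHomComp_apply]; simp
    have h2 : f (ψ x) = ψ ((t : ZMod q) * x) := by
      rw [hψ, AddChar.zmodChar_apply, map_pow, hf, ← pow_mul]
      have : ((t * x.val : ℕ) : ZMod q) = (t : ZMod q) * x := by push_cast; simp
      rw [← AddChar.zmodChar_apply' he (t * x.val), this]
    rw [map_mul, h1, h2]
  set b : (ZMod q)ˣ := ZMod.unitOfCoprime t ht with hb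
  have hbcoe : ((b : ZMod q)) = (t : ZMod q) := ZMod.coe_unitOfCoprime t ht
  have hmul := gaussSum_mulShift χ ψ b
  rw [hbcoe] at hmul
  have hc : quadraticChar (ZMod q) ((t : ZMod q)) = 1 ∨
      quadraticChar (ZMod q) ((t : ZMod q)) = -1 := by
    refine quadraticChar_dichotomy ?_
    rw [← hbcoe]; exact b.ne_zero
  have hχval : χ ((t : ZMod q)) = ((quadraticChar (ZMod q) ((t : ZMod q)) : ℤ) : K) := by
    rw [hχ, MulChar.ringHomComp_apply]; rfl
  rw [gAux_eq_gaussSum q he, ← hψ, ← hχ, key]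
  rcases hc with h | h
  · rw [← hmul, hχval, h]; push_cast; ring
  · rw [← hmul, hχval, h]; push_cast; ring




/-- Totalized value `χ_q(t)` of the quadratic character mod `q`. -/
noncomputable def chiVal (q t : ℕ) : ℤ :=
  if h : q.Prime then
    letI : Fact q.Prime := ⟨h⟩
    quadraticChar (ZMod q) ((t : ZMod q))
  else 0

lemma chiVal_def (q : ℕ) [hq : Fact q.Prime] (t : ℕ) :
    chiVal q t = quadraticChar (ZMod q) ((t : ZMod q)) := by
  rw [chiVal, dif_pos hq.out]


lemma prodQstar_natAbs {S : Finset ℕ} (h : ∀ q ∈ S, q.Prime) :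
    (∏ q ∈ S, qstar q).natAbs = ∏ q ∈ S, q := by
  rw [show (∏ q ∈ S, qstar q).natAbs = ∏ q ∈ S, (qstar q).natAbs from
    map_prod Int.natAbsHom _ _]
  exact Finset.prod_congr rfl fun q hq => by
    haveI : Fact q.Prime := ⟨h q hq⟩; exact qstar_natAbs q

lemma prodQstar_zmod4 {S : Finset ℕ} (h : ∀ q ∈ S, q.Prime ∧ q ≠ 2) :
    ((∏ q ∈ S, qstar q : ℤ) : ZMod 4) = 1 := by
  rw [show (((∏ q ∈ S, qstar q : ℤ)) : ZMod 4) = ∏ q ∈ S, ((qstar q : ℤ) : ZMod 4) from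
    map_prod (Int.castRingHom (ZMod 4)) _ _]
  exact Finset.prod_eq_one fun q hq => by
    haveI : Fact q.Prime := ⟨(h q hq).1⟩; exact qstar_cast_zmod4 q (h q hq).2

lemma int_cast_zmod4 {a b : ℤ} (h : a % 4 = b % 4) : ((a : ZMod 4)) = ((b : ZMod 4)) :=
  (ZMod.intCast_eq_intCast_iff _ _ _).mpr h

/-- For odd squarefree `m`, `m = ± ∏ q*` with the product `≡ 1 mod 4`. -/
lemma odd_part_decomp {m : ℤ} (hsf : Squarefree m) (hodd : ¬ (2:ℤ) ∣ m) :
    (m = ∏ q ∈ m.natAbs.primeFactors, qstar q ∨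
     m = -∏ q ∈ m.natAbs.primeFactors, qstar q) ∧
    ((∏ q ∈ m.natAbs.primeFactors, qstar q : ℤ) : ZMod 4) = 1 ∧
    (∏ q ∈ m.natAbs.primeFactors, q) = m.natAbs := by
  have hm0 : m ≠ 0 := hsf.ne_zero
  have hprime : ∀ q ∈ m.natAbs.primeFactors, q.Prime ∧ q ≠ 2 := by
    intro q hq
    refine ⟨Nat.prime_of_mem_primeFactors hq, ?_⟩
    rintro rfl
    have h2 : (2:ℕ) ∣ m.natAbs := Nat.dvd_of_mem_primeFactors hq
    exact hodd (Int.natAbs_dvd_natAbs.mp (by simpa using h2))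
  have hsfn : Squarefree m.natAbs := Int.squarefree_natAbs.mpr hsf
  have hprod : (∏ q ∈ m.natAbs.primeFactors, q) = m.natAbs :=
    Nat.prod_primeFactors_of_squarefree hsfn
  refine ⟨?_, prodQstar_zmod4 hprime, hprod⟩
  have : (∏ q ∈ m.natAbs.primeFactors, qstar q).natAbs = m.natAbs := by
    rw [prodQstar_natAbs fun q hq => (hprime q hq).1, hprod]
  have h2 := Int.natAbs_eq_natAbs_iff.mp this
  rcases h2 with h | h
  · exact Or.inl h.symm
  · right; rw [h, neg_neg]

lemma erase_two_pf_mul {k m : ℕ} (hk : k = 4 ∨ k = 8) (hm : m ≠ 0) (hodd : ¬ 2 ∣ m) :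
    (k * m).primeFactors.erase 2 = m.primeFactors := by
  have hk0 : k ≠ 0 := by rcases hk with rfl | rfl <;> norm_num
  have hpfk : k.primeFactors = {2} := by
    rcases hk with rfl | rfl
    · rw [show (4:ℕ) = 2 ^ 2 by norm_num,
        Nat.primeFactors_prime_pow (by norm_num) Nat.prime_two]
    · rw [show (8:ℕ) = 2 ^ 3 by norm_num,
        Nat.primeFactors_prime_pow (by norm_num) Nat.prime_two]
  have h2m : (2:ℕ) ∉ m.primeFactors := fun h => hodd (Nat.dvd_of_mem_primeFactors h)
  rw [Nat.primeFactors_mul hk0 hm, hpfk]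
  ext q
  simp only [Finset.mem_erase, Finset.mem_union, Finset.mem_singleton]
  constructor
  · rintro ⟨hne, h2 | hq⟩
    · exact absurd h2 hne
    · exact hq
  · intro hq
    exact ⟨fun h => h2m (h ▸ hq), Or.inr hq⟩

lemma fd_decomp (Δ : ℤ) (hΔ : IsFundamentalDiscriminant Δ) :
    ∃ u : ℤ, (u = 1 ∨ u = -4 ∨ u = 8 ∨ u = -8) ∧
      Δ = u * ∏ q ∈ Δ.natAbs.primeFactors.erase 2, qstar q ∧
      Δ.natAbs = u.natAbs * ∏ q ∈ Δ.natAbs.primeFactors.erase 2, q ∧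
      Squarefree (∏ q ∈ Δ.natAbs.primeFactors.erase 2, q) := by
  obtain ⟨hne, hcase⟩ := hΔ
  rcases hcase with ⟨h4, hsf⟩ | ⟨m, rfl, hsf, hm4⟩
  · -- odd case
    have hodd : ¬ (2:ℤ) ∣ Δ := by omega
    have h2m : (2:ℕ) ∉ Δ.natAbs.primeFactors := by
      intro h
      have h2 : (2:ℕ) ∣ Δ.natAbs := Nat.dvd_of_mem_primeFactors h
      exact hodd (Int.natAbs_dvd_natAbs.mp (by simpa using h2))
    rw [Finset.erase_eq_of_notMem h2m]
    obtain ⟨hsign, hz4, hprod⟩ := odd_part_decomp hsf hodd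
    have hΔP : Δ = ∏ q ∈ Δ.natAbs.primeFactors, qstar q := by
      rcases hsign with h | h
      · exact h
      · exfalso
        have hc : ((Δ : ℤ) : ZMod 4) = ((1 : ℤ) : ZMod 4) := int_cast_zmod4 (by omega)
        rw [h, Int.cast_neg, hz4] at hc
        simp at hc
        exact absurd hc (by decide)
    refine ⟨1, Or.inl rfl, by rw [one_mul]; exact hΔP, ?_, ?_⟩
    · rw [Int.natAbs_one, one_mul, hprod]
    · rw [hprod]; exact Int.squarefree_natAbs.mpr hsf
  · -- even cases
    have hm0 : m ≠ 0 := by omega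
    rcases hm4 with hm2 | hm3
    · -- m ≡ 2 mod 4 : Δ = 4m = 8 m₂
      obtain ⟨m₂, rfl⟩ : (2:ℤ) ∣ m := by omega
      have h4m : ¬ (4:ℤ) ∣ 2 * m₂ := by
        intro h
        obtain ⟨c, hc⟩ := h
        have : (2:ℤ) * 2 ∣ 2 * m₂ := ⟨c, by linarith⟩
        exact (by decide : ¬ IsUnit (2:ℤ)) (hsf 2 this)
      have hm₂odd : ¬ (2:ℤ) ∣ m₂ := by omega
      have hm₂0 : m₂ ≠ 0 := by omega
      have hsf₂ : Squarefree m₂ := hsf.squarefree_of_dvd ⟨2, mul_comm 2 m₂⟩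
      have hnatAbs : (4 * (2 * m₂)).natAbs = 8 * m₂.natAbs := by
        rw [show (4 * (2 * m₂)) = 8 * m₂ by ring, Int.natAbs_mul]; rfl
      have hS : (4 * (2 * m₂)).natAbs.primeFactors.erase 2 = m₂.natAbs.primeFactors := by
        rw [hnatAbs]
        exact erase_two_pf_mul (Or.inr rfl) (Int.natAbs_ne_zero.mpr hm₂0)
          (fun h => hm₂odd (Int.natAbs_dvd_natAbs.mp (by simpa using h)))
      rw [hS]
      obtain ⟨hsign, hz4, hprod⟩ := odd_part_decomp hsf₂ hm₂odd
      rcases hsign with h | h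
      · refine ⟨8, Or.inr (Or.inr (Or.inl rfl)), by linear_combination 8 * h, ?_, ?_⟩
        · rw [hnatAbs, hprod]; rfl
        · rw [hprod]; exact Int.squarefree_natAbs.mpr hsf₂
      · refine ⟨-8, Or.inr (Or.inr (Or.inr rfl)), by linear_combination 8 * h, ?_, ?_⟩
        · rw [hnatAbs, hprod]; rfl
        · rw [hprod]; exact Int.squarefree_natAbs.mpr hsf₂
    · -- m ≡ 3 mod 4 : Δ = 4m = -4 P
      have hmodd : ¬ (2:ℤ) ∣ m := by omega
      have hnatAbs : (4 * m).natAbs = 4 * m.natAbs := by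
        rw [Int.natAbs_mul]; rfl
      have hS : (4 * m).natAbs.primeFactors.erase 2 = m.natAbs.primeFactors := by
        rw [hnatAbs]
        exact erase_two_pf_mul (Or.inl rfl) (Int.natAbs_ne_zero.mpr hm0)
          (fun h => hmodd (Int.natAbs_dvd_natAbs.mp (by simpa using h)))
      rw [hS]
      obtain ⟨hsign, hz4, hprod⟩ := odd_part_decomp hsf hmodd
      have hmP : m = -∏ q ∈ m.natAbs.primeFactors, qstar q := by
        rcases hsign with h | h
        · exfalso
          have hc : ((m : ℤ) : ZMod 4) = ((3 : ℤ) : ZMod 4) := int_cast_zmod4 (by omega)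
          rw [h, hz4] at hc
          exact absurd hc.symm (by decide)
        · exact h
      refine ⟨-4, Or.inr (Or.inl rfl), by linear_combination 4 * hmP, ?_, ?_⟩
      · rw [hnatAbs, hprod]; rfl
      · rw [hprod]; exact Int.squarefree_natAbs.mpr hsf


lemma exists_sqrt_fixed (N M : ℕ+) (hNM : (N:ℕ) ∣ (M:ℕ)) (Δ : ℤ)
    (h : ∃ x : CyclotomicField N ℚ, x ^ 2 = (Δ : CyclotomicField N ℚ)) :
    ∃ y : CyclotomicField M ℚ, y ^ 2 = (Δ : CyclotomicField M ℚ) ∧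
      ∀ σ : CyclotomicField M ℚ ≃ₐ[ℚ] CyclotomicField M ℚ,
        (∀ ρ : CyclotomicField M ℚ, ρ ^ (N:ℕ) = 1 → σ ρ = ρ) → σ y = y := by
  obtain ⟨x, hx⟩ := h
  haveI : NeZero (N:ℕ) := ⟨N.pos.ne'⟩
  haveI : IsCyclotomicExtension {(N:ℕ)} ℚ (CyclotomicField N ℚ) :=
    haveI : NeZero ((N:ℕ):ℚ) := ⟨by simp⟩
    CyclotomicField.isCyclotomicExtension (N:ℕ) ℚ
  haveI : IsSplittingField ℚ (CyclotomicField N ℚ) (cyclotomic N ℚ) :=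
    IsCyclotomicExtension.splitting_field_cyclotomic (N:ℕ) ℚ (CyclotomicField N ℚ)
  set K := CyclotomicField M ℚ with hK
  haveI : IsCyclotomicExtension {(M:ℕ)} ℚ K :=
    haveI : NeZero ((M:ℕ):ℚ) := ⟨by simp⟩
    CyclotomicField.isCyclotomicExtension (M:ℕ) ℚ
  have hζ := IsCyclotomicExtension.zeta_spec M ℚ K
  obtain ⟨d, hd⟩ := hNM
  have hν : IsPrimitiveRoot ((IsCyclotomicExtension.zeta M ℚ K) ^ d) N :=
    IsPrimitiveRoot.pow M.pos hζ (by rw [hd, mul_comm])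
  have hsplits : Splits ((cyclotomic N ℚ).map (algebraMap ℚ K)) := by
    have hg : ((X ^ (N:ℕ) - 1 : ℚ[X]).map (algebraMap ℚ K)) = X ^ (N:ℕ) - C 1 := by
      rw [Polynomial.map_sub, Polynomial.map_one, Polynomial.map_pow, Polynomial.map_X, C_1]
    refine Splits.of_dvd (by rw [hg]; exact X_pow_sub_one_splits hν) ?_
      (Polynomial.map_dvd _ (cyclotomic.dvd_X_pow_sub_one (N:ℕ) ℚ))
    · rw [hg]
      intro h0
      have := congrArg (fun p => Polynomial.coeff p (N:ℕ)) h0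
      simp [coeff_X_pow, Polynomial.coeff_C, Polynomial.coeff_one, (PNat.pos N).ne'] at this
  let f : CyclotomicField N ℚ →ₐ[ℚ] K :=
    IsSplittingField.lift (CyclotomicField N ℚ) (cyclotomic N ℚ) hsplits
  refine ⟨f x, ?_, ?_⟩
  · rw [← map_pow, hx, map_intCast]
  · intro σ hσ
    have hx_top : x ∈ Algebra.adjoin ℚ
        {b : CyclotomicField N ℚ | ∃ n : ℕ, n ∈ ({(N:ℕ)} : Set ℕ) ∧ n ≠ 0 ∧ b ^ n = 1} :=
      IsCyclotomicExtension.adjoin_roots x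
    have hle : Algebra.adjoin ℚ
        {b : CyclotomicField N ℚ | ∃ n : ℕ, n ∈ ({(N:ℕ)} : Set ℕ) ∧ n ≠ 0 ∧ b ^ n = 1} ≤
        AlgHom.equalizer (σ.toAlgHom.comp f) f := by
      rw [Algebra.adjoin_le_iff]
      rintro b ⟨n, hn, -, hb⟩
      rw [Set.mem_singleton_iff] at hn
      rw [hn] at hb
      have : (f b) ^ (N:ℕ) = 1 := by rw [← map_pow, hb, map_one]
      exact hσ (f b) this
    exact hle hx_top


lemma exists_aut (M : ℕ+) (t : ℕ) (ht : Nat.Coprime t (M:ℕ)) :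
    ∃ σ : CyclotomicField M ℚ ≃ₐ[ℚ] CyclotomicField M ℚ,
      ∀ ρ : CyclotomicField M ℚ, ρ ^ (M:ℕ) = 1 → σ ρ = ρ ^ t := by
  set K := CyclotomicField M ℚ with hK
  haveI : IsCyclotomicExtension {(M:ℕ)} ℚ K :=
    haveI : NeZero ((M:ℕ):ℚ) := ⟨by simp⟩
    CyclotomicField.isCyclotomicExtension (M:ℕ) ℚ
  haveI : NeZero (M:ℕ) := ⟨M.pos.ne'⟩
  have hζ := IsCyclotomicExtension.zeta_spec M ℚ K
  set ζ := IsCyclotomicExtension.zeta M ℚ K with hζdef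
  have hirr : Irreducible (cyclotomic M ℚ) := cyclotomic.irreducible_rat M.pos
  set u : (ZMod (M:ℕ))ˣ := ZMod.unitOfCoprime t ht with hu
  refine ⟨(IsCyclotomicExtension.autEquivPow K hirr).symm u, ?_⟩
  set σ := (IsCyclotomicExtension.autEquivPow K hirr).symm u with hσ
  have h1 : (hζ.autToPow ℚ) σ = u := by
    have h := (IsCyclotomicExtension.autEquivPow K hirr).apply_symm_apply u
    exact h
  have h2 : σ ζ = ζ ^ t := by
    have h3 := hζ.autToPow_spec ℚ σ
    rw [h1] at h3
    rw [← h3, ZMod.coe_unitOfCoprime, ZMod.val_natCast, ← pow_eq_pow_mod t hζ.pow_eq_one]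
  intro ρ hρ
  obtain ⟨i, hi, rfl⟩ := hζ.eq_pow_of_pow_eq_one hρ
  rw [map_pow, h2, ← pow_mul, mul_comm t i, pow_mul]


lemma coprime_of_modEq_one {t m : ℕ} (h : t ≡ 1 [MOD m]) : Nat.Coprime t m := by
  have h' : t % m = 1 % m := h
  have : Nat.gcd m t = Nat.gcd m 1 := by
    rw [Nat.gcd_rec m t, Nat.gcd_rec m 1, h']
  simpa [Nat.Coprime, Nat.gcd_comm] using this


/-- Let `Δ` be a fundamental discriminant and `N ≥ 1` an integer. If `ℚ(√Δ)` is contained in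
the cyclotomic field `ℚ(ζ_N)` (i.e. some element of `ℚ(ζ_N)` has square `Δ`), then `|Δ|`
divides `N`; in particular `|Δ|` is the conductor of the quadratic field `ℚ(√Δ)`. -/
theorem natAbs_dvd_of_quadratic_subfield_of_cyclotomic
    (Δ : ℤ) (hΔ : IsFundamentalDiscriminant Δ) (N : ℕ+)
    (h : ∃ x : CyclotomicField N ℚ, x ^ 2 = (Δ : CyclotomicField N ℚ)) :
    Δ.natAbs ∣ (N : ℕ) := by
  classical
  obtain ⟨u, hucases, hΔeq, hDabs, hsfP⟩ := fd_decomp Δ hΔ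
  set n : ℕ := (N:ℕ) with hn
  have hn0 : 0 < n := N.pos
  set D : ℕ := Δ.natAbs with hD
  set S : Finset ℕ := D.primeFactors.erase 2 with hSdef
  have hSprime : ∀ q ∈ S, q.Prime := fun q hq =>
    Nat.prime_of_mem_primeFactors (Finset.mem_of_mem_erase hq)
  have hSne2 : ∀ q ∈ S, q ≠ 2 := fun q hq => Finset.ne_of_mem_erase hq
  have hP0 : (∏ q ∈ S, q) ≠ 0 :=
    Finset.prod_ne_zero_iff.mpr fun q hq => (hSprime q hq).ne_zero
  have huabs : u.natAbs = 1 ∨ u.natAbs = 4 ∨ u.natAbs = 8 := by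
    rcases hucases with rfl | rfl | rfl | rfl <;> norm_num
  have hu0 : u.natAbs ≠ 0 := by rcases huabs with h' | h' | h' <;> omega
  have hD0 : D ≠ 0 := by rw [hDabs]; exact mul_ne_zero hu0 hP0
  have hΔ0 : Δ ≠ 0 := fun h0 => hD0 (by rw [hD, h0]; rfl)
  set M₀ : ℕ := 8 * D * n with hM₀
  have hM₀0 : 0 < M₀ := by
    have := Nat.pos_of_ne_zero hD0
    positivity
  set M : ℕ+ := ⟨M₀, hM₀0⟩ with hM
  set K := CyclotomicField M ℚ with hK
  haveI : IsCyclotomicExtension {(M:ℕ)} ℚ K :=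
    haveI : NeZero ((M:ℕ):ℚ) := ⟨by simp⟩
    CyclotomicField.isCyclotomicExtension (M:ℕ) ℚ
  have hMcoe : (M:ℕ) = M₀ := rfl
  have hζspec := IsCyclotomicExtension.zeta_spec M ℚ K
  set ζ : K := IsCyclotomicExtension.zeta M ℚ K with hζdef
  have hζM : ζ ^ M₀ = 1 := by
    exact hζspec.pow_eq_one
  have hnM : n ∣ M₀ := ⟨8 * D, by rw [hM₀]; ring⟩
  obtain ⟨y, hy, hyfix⟩ := exists_sqrt_fixed N M (by rw [hMcoe]; exact hnM) Δ h
  have hpowM : ∀ k : ℕ, (ζ ^ k) ^ M₀ = 1 := fun k => by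
    rw [← pow_mul, mul_comm, pow_mul, hζM, one_pow]
  set e : ℕ → K := fun q => ζ ^ (M₀ / q) with he
  have heprim : ∀ q ∈ S, IsPrimitiveRoot (e q) q := by
    intro q hq
    have hqD : q ∣ D := Nat.dvd_of_mem_primeFactors (Finset.mem_of_mem_erase hq)
    have hqM : q ∣ M₀ := hqD.trans ⟨8 * n, by rw [hM₀]; ring⟩
    exact IsPrimitiveRoot.pow M.pos hζspec
      (show (M:ℕ) = (M₀/q) * q by rw [hMcoe, Nat.div_mul_cancel hqM])
  set w : K := ∏ q ∈ S, gAux (e q) q with hw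
  have hw2 : w ^ 2 = ((∏ q ∈ S, qstar q : ℤ) : K) := by
    rw [hw, ← Finset.prod_pow,
      show (((∏ q ∈ S, qstar q : ℤ)) : K) = ∏ q ∈ S, ((qstar q : ℤ) : K) from
        map_prod (Int.castRingHom K) _ _]
    refine Finset.prod_congr rfl fun q hq => ?_
    haveI : Fact q.Prime := ⟨hSprime q hq⟩
    exact gAux_sq q (hSne2 q hq) (heprim q hq)
  set i : K := ζ ^ (M₀ / 4) with hidef
  set r : K := ζ ^ (M₀ / 8) with hrdef
  have h4M : (4:ℕ) ∣ M₀ := ⟨2 * D * n, by rw [hM₀]; ring⟩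
  have h8M : (8:ℕ) ∣ M₀ := ⟨D * n, by rw [hM₀]; ring⟩
  have hiprim : IsPrimitiveRoot i 4 :=
    IsPrimitiveRoot.pow M.pos hζspec (by rw [hMcoe, Nat.div_mul_cancel h4M])
  have hrprim : IsPrimitiveRoot r 8 :=
    IsPrimitiveRoot.pow M.pos hζspec (by rw [hMcoe, Nat.div_mul_cancel h8M])
  have hi2 : i ^ 2 = -1 :=
    (IsPrimitiveRoot.pow (by norm_num) hiprim (by norm_num : (4:ℕ) = 2 * 2)).eq_neg_one_of_two_right
  have hr4 : r ^ 4 = -1 :=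
    (IsPrimitiveRoot.pow (by norm_num) hrprim (by norm_num : (8:ℕ) = 4 * 2)).eq_neg_one_of_two_right
  have hr8 : r ^ 8 = 1 := hrprim.pow_eq_one
  have hi4 : i ^ 4 = 1 := hiprim.pow_eq_one
  set v : K := if u = 1 then 1 else if u = -4 then 2 * i
    else if u = 8 then 2 * (r + r ^ 7) else 2 * (r - r ^ 7) with hv
  have hplus : (r + r ^ 7) ^ 2 = 2 := by
    have hh : (r + r ^ 7) ^ 2 = r ^ 2 + 2 * r ^ 8 + r ^ 8 * (r ^ 4 * r ^ 2) := by ring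
    rw [hh, hr8, hr4]; ring
  have hminus : (r - r ^ 7) ^ 2 = -2 := by
    have hh : (r - r ^ 7) ^ 2 = r ^ 2 - 2 * r ^ 8 + r ^ 8 * (r ^ 4 * r ^ 2) := by ring
    rw [hh, hr8, hr4]; ring
  have hv2 : v ^ 2 = ((u : ℤ) : K) := by
    rcases hucases with rfl | rfl | rfl | rfl
    · simp [hv]
    · rw [hv, if_neg (by norm_num), if_pos rfl]
      rw [mul_pow, hi2]; norm_num
    · rw [hv, if_neg (by norm_num), if_neg (by norm_num), if_pos rfl]
      rw [mul_pow, hplus]; norm_num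
    · rw [hv, if_neg (by norm_num), if_neg (by norm_num), if_neg (by norm_num)]
      rw [mul_pow, hminus]; norm_num
  have hvw2 : (v * w) ^ 2 = (Δ : K) := by
    rw [mul_pow, hv2, hw2, ← Int.cast_mul, ← hΔeq]
  -- the master contradiction device
  have key : ∀ t : ℕ, Nat.Coprime t M₀ → t ≡ 1 [MOD n] →
      (∀ σ : K ≃ₐ[ℚ] K, (∀ ρ : K, ρ ^ M₀ = 1 → σ ρ = ρ ^ t) → σ (v * w) = -(v * w)) →
      False := by
    intro t hcop hmod hflip
    obtain ⟨σ, hσ⟩ := exists_aut M t (by rw [hMcoe]; exact hcop)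
    have hσ' : ∀ ρ : K, ρ ^ M₀ = 1 → σ ρ = ρ ^ t := fun ρ hρ =>
      hσ ρ hρ
    have hfixn : ∀ ρ : K, ρ ^ n = 1 → σ ρ = ρ := by
      intro ρ hρ
      have hρM : ρ ^ M₀ = 1 := by
        rw [show M₀ = n * (8 * D) by rw [hM₀]; ring, pow_mul, hρ, one_pow]
      rw [hσ' ρ hρM]
      calc ρ ^ t = ρ ^ (t % n) := pow_eq_pow_mod t hρ
        _ = ρ ^ (1 % n) := by rw [show t % n = 1 % n from hmod]
        _ = ρ ^ 1 := (pow_eq_pow_mod 1 hρ).symm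
        _ = ρ := pow_one ρ
    have h1 : σ y = y := hyfix σ hfixn
    have h2 : σ (v * w) = -(v * w) := hflip σ hσ'
    have hy0 : y ≠ 0 := by
      intro h0
      rw [h0] at hy
      exact (Int.cast_ne_zero.mpr hΔ0) (by rw [← hy]; ring)
    have htwo : (2:K) ≠ 0 := two_ne_zero
    have hcases : y = v * w ∨ y = -(v * w) := by
      have hfac : (y - v * w) * (y + v * w) = 0 := by
        have hsq : y ^ 2 = (v * w) ^ 2 := by rw [hy, hvw2]
        linear_combination hsq
      rcases mul_eq_zero.mp hfac with h' | h'
      · exact Or.inl (sub_eq_zero.mp h')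
      · exact Or.inr (eq_neg_of_add_eq_zero_left h')
    rcases hcases with hc | hc
    · rw [hc, h2] at h1
      have : (2:K) * (v * w) = 0 := by linear_combination - h1
      rcases mul_eq_zero.mp this with h' | h'
      · exact htwo h'
      · exact hy0 (by rw [hc, h'])
    · rw [hc, map_neg, h2, neg_neg] at h1
      have : (2:K) * (v * w) = 0 := by linear_combination h1
      rcases mul_eq_zero.mp this with h' | h'
      · exact htwo h'
      · exact hy0 (by rw [hc, h', neg_zero])
  -- action of automorphisms on w
  have hwσ : ∀ (σ : K ≃ₐ[ℚ] K) (t : ℕ), (∀ ρ : K, ρ ^ M₀ = 1 → σ ρ = ρ ^ t) →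
      Nat.Coprime t M₀ →
      σ w = (∏ q ∈ S, ((chiVal q t : ℤ) : K)) * w := by
    intro σ t hσ hcop
    rw [hw, map_prod, ← Finset.prod_mul_distrib]
    refine Finset.prod_congr rfl fun q hq => ?_
    haveI : Fact q.Prime := ⟨hSprime q hq⟩
    have hqD : q ∣ D := Nat.dvd_of_mem_primeFactors (Finset.mem_of_mem_erase hq)
    have hqM : q ∣ M₀ := hqD.trans ⟨8 * n, by rw [hM₀]; ring⟩
    rw [chiVal_def]
    exact gAux_map q (heprim q hq).pow_eq_one σ.toAlgHom.toRingHom t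
      (hσ (e q) (hpowM _)) (hcop.coprime_dvd_right hqM)
  -- ### flip at an odd prime p
  have hqdvd : ∀ p ∈ S, p ∣ n := by
    intro p hpS
    by_contra hpn
    haveI hfp : Fact p.Prime := ⟨hSprime p hpS⟩
    have hp2 : p ≠ 2 := hSne2 p hpS
    have hp2pow : ∀ k : ℕ, p ∣ 2 ^ k → False := fun k hk =>
      hp2 ((Nat.prime_dvd_prime_iff_eq hfp.out Nat.prime_two).mp (hfp.out.dvd_of_dvd_pow hk))
    set R : ℕ := ∏ q ∈ S.erase p, q with hR
    have hpR : p * R = ∏ q ∈ S, q := Finset.mul_prod_erase S (fun q => q) hpS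
    set m : ℕ := 8 * u.natAbs * R * n with hm
    have hMm : M₀ = p * m := by rw [hM₀, hDabs, ← hpR, hm]; ring
    have hpm : ¬ p ∣ m := by
      intro hdvd
      rcases (Nat.Prime.dvd_mul hfp.out).mp hdvd with hd | hd
      · rcases (Nat.Prime.dvd_mul hfp.out).mp hd with hd2 | hd2
        · rcases (Nat.Prime.dvd_mul hfp.out).mp hd2 with hd3 | hd3
          · exact hp2pow 3 (by rw [show (2:ℕ)^3 = 8 from by norm_num]; exact hd3)
          · rcases huabs with h' | h' | h'
            · rw [h'] at hd3
              exact hfp.out.one_lt.ne' (Nat.dvd_one.mp hd3)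
            · rw [h'] at hd3
              exact hp2pow 2 (by rw [show (2:ℕ)^2 = 4 from by norm_num]; exact hd3)
            · rw [h'] at hd3
              exact hp2pow 3 (by rw [show (2:ℕ)^3 = 8 from by norm_num]; exact hd3)
        · have hdd : p * p ∣ p * R := mul_dvd_mul_left p hd2
          rw [hpR] at hdd
          exact hfp.out.ne_one (Nat.isUnit_iff.mp (hsfP p hdd))
      · exact hpn hd
    have cop_pm : Nat.Coprime p m := (Nat.Prime.coprime_iff_not_dvd hfp.out).mpr hpm
    obtain ⟨b₀, hb₀⟩ := FiniteField.exists_nonsquare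
      (F := ZMod p) (by rw [ZMod.ringChar_zmod_n]; exact hp2)
    have b₀ne : b₀ ≠ 0 := fun h0 => hb₀ (h0 ▸ ⟨0, (mul_zero 0).symm⟩)
    obtain ⟨t, ht1, ht2⟩ := Nat.chineseRemainder cop_pm (ZMod.val b₀) 1
    have hcopm : Nat.Coprime t m := coprime_of_modEq_one ht2
    have htp : ((t:ℕ) : ZMod p) = b₀ := by
      have hh := (ZMod.natCast_eq_natCast_iff _ _ _).mpr ht1
      simpa using hh
    have hcopp : Nat.Coprime t p := by
      rw [Nat.coprime_comm]
      refine (Nat.Prime.coprime_iff_not_dvd hfp.out).mpr ?_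
      intro hdv
      have h0 : ((t:ℕ) : ZMod p) = 0 := (ZMod.natCast_eq_zero_iff _ _).mpr hdv
      rw [htp] at h0
      exact b₀ne h0
    have hcopM₀ : Nat.Coprime t M₀ := by
      rw [hMm]; exact Nat.Coprime.mul_right hcopp hcopm
    have hnm : n ∣ m := ⟨8 * u.natAbs * R, by rw [hm]; ring⟩
    have hmodn : t ≡ 1 [MOD n] := Nat.ModEq.of_dvd hnm ht2
    have h8m : (8:ℕ) ∣ m := ⟨u.natAbs * R * n, by rw [hm]; ring⟩
    have ht8 : t % 8 = 1 := by
      have hh : t ≡ 1 [MOD 8] := Nat.ModEq.of_dvd h8m ht2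
      simpa [Nat.ModEq] using hh
    refine key t hcopM₀ hmodn ?_
    intro σ hσ
    have ht4 : t % 4 = 1 := by omega
    have hit : σ i = i := by
      rw [hσ i (hpowM _), pow_eq_pow_mod t hi4, ht4, pow_one]
    have hrt : σ r = r := by
      rw [hσ r (hpowM _), pow_eq_pow_mod t hr8, ht8, pow_one]
    have hvfix : σ v = v := by
      rcases hucases with rfl | rfl | rfl | rfl
      · rw [hv, if_pos rfl, map_one]
      · rw [hv, if_neg (by norm_num), if_pos rfl]
        simp only [map_mul, map_ofNat, hit]
      · rw [hv, if_neg (by norm_num), if_neg (by norm_num), if_pos rfl]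
        simp only [map_mul, map_add, map_pow, map_ofNat, hrt]
      · rw [hv, if_neg (by norm_num), if_neg (by norm_num), if_neg (by norm_num)]
        simp only [map_mul, map_sub, map_pow, map_ofNat, hrt]
    have hprodval : (∏ q ∈ S, ((chiVal q t : ℤ) : K)) = -1 := by
      rw [← Finset.mul_prod_erase S _ hpS]
      have hqp : ((chiVal p t : ℤ) : K) = -1 := by
        rw [chiVal_def, htp, quadraticChar_neg_one_iff_not_isSquare.mpr hb₀]
        norm_num
      have hrest : (∏ q ∈ S.erase p, ((chiVal q t : ℤ) : K)) = 1 := by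
        refine Finset.prod_eq_one fun q hq => ?_
        haveI : Fact q.Prime := ⟨hSprime q (Finset.mem_of_mem_erase hq)⟩
        have hqR : q ∣ R := Finset.dvd_prod_of_mem _ hq
        have hqm : q ∣ m := hqR.trans ⟨8 * u.natAbs * n, by rw [hm]; ring⟩
        have htq : ((t:ℕ) : ZMod q) = 1 := by
          have hh := (ZMod.natCast_eq_natCast_iff _ _ _).mpr (Nat.ModEq.of_dvd hqm ht2)
          simpa using hh
        rw [chiVal_def, htq, map_one]
        norm_num
      rw [hqp, hrest]
      ring
    rw [map_mul, hvfix, hwσ σ t hσ hcopM₀, hprodval]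
    ring
  -- ### flips at 2
  set c : ℕ := ordCompl[2] M₀ with hc
  have hcodd : ¬ 2 ∣ c := Nat.not_dvd_ordCompl Nat.prime_two hM₀0.ne'
  have hcop2c : Nat.Coprime 2 c := (Nat.prime_two.coprime_iff_not_dvd).mpr hcodd
  have hM₀split : 2 ^ (M₀.factorization 2) * c = M₀ := Nat.ordProj_mul_ordCompl_eq_self M₀ 2
  have hqc : ∀ q ∈ S, q ∣ c := by
    intro q hq
    have hqD : q ∣ D := Nat.dvd_of_mem_primeFactors (Finset.mem_of_mem_erase hq)
    have hqM : q ∣ M₀ := hqD.trans ⟨8 * n, by rw [hM₀]; ring⟩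
    have hcopq : Nat.Coprime q (2 ^ (M₀.factorization 2)) := by
      refine Nat.Coprime.pow_right _ ?_
      exact (Nat.coprime_primes (hSprime q hq) Nat.prime_two).mpr (hSne2 q hq)
    exact hcopq.dvd_of_dvd_mul_left (by rw [hM₀split]; exact hqM)
  have h2core : ∀ rm : ℕ, rm % 2 = 1 → rm < 8 →
      ∃ t : ℕ, Nat.Coprime t M₀ ∧ t % 8 = rm ∧ t ≡ 1 [MOD c] := by
    intro rm hrm1 hrm8
    have cop8c : Nat.Coprime 8 c := by
      rw [show (8:ℕ) = 2 ^ 3 from by norm_num]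
      exact Nat.Coprime.pow_left 3 hcop2c
    obtain ⟨t, ht1, ht2⟩ := Nat.chineseRemainder cop8c rm 1
    refine ⟨t, ?_, ?_, ht2⟩
    · have ht2' : Nat.Coprime t c := coprime_of_modEq_one ht2
      have htrm : t % 8 = rm % 8 := ht1
      have hcop2t : Nat.Coprime t 2 := by
        rw [Nat.coprime_comm]
        exact (Nat.prime_two.coprime_iff_not_dvd).mpr (by omega)
      rw [← hM₀split]
      exact Nat.Coprime.mul_right (Nat.Coprime.pow_right _ hcop2t) ht2'
    · have htrm : t % 8 = rm % 8 := ht1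
      omega
  have hwfix1 : ∀ (σ : K ≃ₐ[ℚ] K) (t : ℕ), (∀ ρ : K, ρ ^ M₀ = 1 → σ ρ = ρ ^ t) →
      Nat.Coprime t M₀ → t ≡ 1 [MOD c] → σ w = w := by
    intro σ t hσ hcopt htc
    rw [hwσ σ t hσ hcopt]
    have hone : (∏ q ∈ S, ((chiVal q t : ℤ) : K)) = 1 := by
      refine Finset.prod_eq_one fun q hq => ?_
      haveI : Fact q.Prime := ⟨hSprime q hq⟩
      have htq : ((t:ℕ) : ZMod q) = 1 := by
        have hh := (ZMod.natCast_eq_natCast_iff _ _ _).mpr (Nat.ModEq.of_dvd (hqc q hq) htc)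
        simpa using hh
      rw [chiVal_def, htq, map_one]
      norm_num
    rw [hone, one_mul]
  -- flip giving 4 ∣ n when u = -4
  have h4dvd : u = -4 → (4:ℕ) ∣ n := by
    intro hu4
    by_contra h4n
    obtain ⟨t, hcopt, ht8, htc⟩ := h2core 3 (by norm_num) (by norm_num)
    have hnodd : ordCompl[2] n ∣ c := Nat.ordCompl_dvd_ordCompl_of_dvd hnM 2
    have hv2n : n.factorization 2 ≤ 1 := by
      by_contra hgt
      refine h4n (dvd_trans ?_ (Nat.ordProj_dvd n 2))
      calc (4:ℕ) = 2 ^ 2 := by norm_num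
        _ ∣ 2 ^ (n.factorization 2) := pow_dvd_pow 2 (by omega)
    have hn2c : n ∣ 2 * c := by
      calc n = 2 ^ (n.factorization 2) * ordCompl[2] n :=
            (Nat.ordProj_mul_ordCompl_eq_self n 2).symm
        _ ∣ 2 * c := by
            refine mul_dvd_mul ?_ hnodd
            calc 2 ^ (n.factorization 2) ∣ 2 ^ 1 := pow_dvd_pow 2 hv2n
              _ = 2 := pow_one 2
    have ht2' : t ≡ 1 [MOD 2] := show t % 2 = 1 % 2 by omega
    have htn : t ≡ 1 [MOD n] :=
      Nat.ModEq.of_dvd hn2c ((Nat.modEq_and_modEq_iff_modEq_mul hcop2c).mp ⟨ht2', htc⟩)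
    refine key t hcopt htn ?_
    intro σ hσ
    have hit : σ i = -i := by
      have ht4 : t % 4 = 3 := by omega
      rw [hσ i (hpowM _), pow_eq_pow_mod t hi4, ht4]
      calc i ^ 3 = i ^ 2 * i := by ring
        _ = -i := by rw [hi2]; ring
    have hwf : σ w = w := hwfix1 σ t hσ hcopt htc
    have hvneg : σ v = -v := by
      rw [hv, hu4, if_neg (by norm_num), if_pos rfl]
      simp only [map_mul, map_ofNat, hit]
      ring
    rw [map_mul, hvneg, hwf]
    ring
  -- flip giving 8 ∣ n when u = ±8
  have h8dvd : (u = 8 ∨ u = -8) → (8:ℕ) ∣ n := by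
    intro hu8
    by_contra h8n
    obtain ⟨t, hcopt, ht8, htc⟩ := h2core 5 (by norm_num) (by norm_num)
    have hnodd : ordCompl[2] n ∣ c := Nat.ordCompl_dvd_ordCompl_of_dvd hnM 2
    have hv2n : n.factorization 2 ≤ 2 := by
      by_contra hgt
      refine h8n (dvd_trans ?_ (Nat.ordProj_dvd n 2))
      calc (8:ℕ) = 2 ^ 3 := by norm_num
        _ ∣ 2 ^ (n.factorization 2) := pow_dvd_pow 2 (by omega)
    have hcop4c : Nat.Coprime 4 c := by
      rw [show (4:ℕ) = 2 ^ 2 from by norm_num]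
      exact Nat.Coprime.pow_left 2 hcop2c
    have hn4c : n ∣ 4 * c := by
      calc n = 2 ^ (n.factorization 2) * ordCompl[2] n :=
            (Nat.ordProj_mul_ordCompl_eq_self n 2).symm
        _ ∣ 4 * c := by
            refine mul_dvd_mul ?_ hnodd
            calc 2 ^ (n.factorization 2) ∣ 2 ^ 2 := pow_dvd_pow 2 hv2n
              _ = 4 := by norm_num
    have ht4' : t ≡ 1 [MOD 4] := show t % 4 = 1 % 4 by omega
    have htn : t ≡ 1 [MOD n] :=
      Nat.ModEq.of_dvd hn4c ((Nat.modEq_and_modEq_iff_modEq_mul hcop4c).mp ⟨ht4', htc⟩)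
    refine key t hcopt htn ?_
    intro σ hσ
    have hrt : σ r = -r := by
      rw [hσ r (hpowM _), pow_eq_pow_mod t hr8, ht8]
      calc r ^ 5 = r ^ 4 * r := by ring
        _ = -r := by rw [hr4]; ring
    have hwf : σ w = w := hwfix1 σ t hσ hcopt htc
    have hvneg : σ v = -v := by
      rcases hu8 with hu' | hu'
      · rw [hv, hu', if_neg (by norm_num), if_neg (by norm_num), if_pos rfl]
        simp only [map_mul, map_add, map_pow, map_ofNat, hrt]
        ring
      · rw [hv, hu', if_neg (by norm_num), if_neg (by norm_num), if_neg (by norm_num)]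
        simp only [map_mul, map_sub, map_pow, map_ofNat, hrt]
        ring
    rw [map_mul, hvneg, hwf]
    ring
  -- ### final assembly
  have hProdDvd : (∏ q ∈ S, q) ∣ n :=
    Finset.prod_primes_dvd n (fun q hq => (hSprime q hq).prime) hqdvd
  have hcop2P : Nat.Coprime 2 (∏ q ∈ S, q) :=
    Nat.Coprime.prod_right fun q hq =>
      (Nat.coprime_primes Nat.prime_two (hSprime q hq)).mpr fun he' => (hSne2 q hq) he'.symm
  rcases hucases with rfl | rfl | rfl | rfl
  · rw [hD] at hDabs ⊢
    rw [hDabs]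
    simpa using hProdDvd
  · rw [hD] at hDabs ⊢
    rw [hDabs]
    have hcop4P : Nat.Coprime 4 (∏ q ∈ S, q) := by
      rw [show (4:ℕ) = 2 ^ 2 from by norm_num]
      exact Nat.Coprime.pow_left 2 hcop2P
    have h4n : (4:ℕ) ∣ n := h4dvd rfl
    simpa using hcop4P.mul_dvd_of_dvd_of_dvd h4n hProdDvd
  · rw [hD] at hDabs ⊢
    rw [hDabs]
    have hcop8P : Nat.Coprime 8 (∏ q ∈ S, q) := by
      rw [show (8:ℕ) = 2 ^ 3 from by norm_num]
      exact Nat.Coprime.pow_left 3 hcop2P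
    have h8n : (8:ℕ) ∣ n := h8dvd (Or.inl rfl)
    simpa using hcop8P.mul_dvd_of_dvd_of_dvd h8n hProdDvd
  · rw [hD] at hDabs ⊢
    rw [hDabs]
    have hcop8P : Nat.Coprime 8 (∏ q ∈ S, q) := by
      rw [show (8:ℕ) = 2 ^ 3 from by norm_num]
      exact Nat.Coprime.pow_left 3 hcop2P
    have h8n : (8:ℕ) ∣ n := h8dvd (Or.inr rfl)
    simpa using hcop8P.mul_dvd_of_dvd_of_dvd h8n hProdDvd
end
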